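/- arXiv:1710.05797 — 9 statements merged into one kernel-verified Lean document; each statement's English description precedes it below -/
import Mathlib

section
/- The shape function N1 satisfies the Kronecker delta property: N1(P1) = 1, N1(P2) = 0, N1(P3) = 0, and both partial derivatives ∂N1/∂x and ∂N1/∂y vanish at each of the three nodes P1, P2, P3. -/
noncomputable section

/-- Area coordinate `L1(x,y) = 1 - x/a - y/b`. -/
def L1 (a b : ℝ) (x y : ℝ) : ℝ := 1 - x / a - y / b

/-- Area coordinate `L2(x,y) = x/a - (1/h - 1/b)·y`. -/
def L2 (a h b : ℝ) (x y : ℝ) : ℝ := x / a - (1 / h - 1 / b) * y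

/-- Area coordinate `L3(x,y) = y/h`. -/
def L3 (h : ℝ) (x y : ℝ) : ℝ := y / h

/-- Deflection shape function `N1 = L1 + L1²L2 + L1²L3 - L1L2² - L1L3²`. -/
def N1 (a h b : ℝ) (x y : ℝ) : ℝ :=
  L1 a b x y + (L1 a b x y) ^ 2 * L2 a h b x y + (L1 a b x y) ^ 2 * L3 h x y
    - L1 a b x y * (L2 a h b x y) ^ 2 - L1 a b x y * (L3 h x y) ^ 2

/-- Partial derivative in the first variable. -/
def pdx (f : ℝ → ℝ → ℝ) (x y : ℝ) : ℝ := deriv (fun t => f t y) x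

/-- Partial derivative in the second variable. -/
def pdy (f : ℝ → ℝ → ℝ) (x y : ℝ) : ℝ := deriv (fun t => f x t) y

lemma hasDerivAt_N1_x (a h b x y : ℝ) :
    HasDerivAt (fun t => N1 a h b t y)
      (-(1/a) + (2 * L1 a b x y * (-(1/a)) * L2 a h b x y + (L1 a b x y)^2 * (1/a))
        + (2 * L1 a b x y * (-(1/a)) * L3 h x y + (L1 a b x y)^2 * 0)
        - ((-(1/a)) * (L2 a h b x y)^2 + L1 a b x y * (2 * L2 a h b x y * (1/a)))
        - ((-(1/a)) * (L3 h x y)^2 + L1 a b x y * (2 * L3 h x y * 0))) x := by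
  have h1 : HasDerivAt (fun t => L1 a b t y) (-(1/a)) x := by
    have := (((hasDerivAt_id x).div_const a).const_sub 1).sub_const (y / b)
    simpa [L1] using this
  have h2 : HasDerivAt (fun t => L2 a h b t y) (1/a) x := by
    have := ((hasDerivAt_id x).div_const a).sub_const ((1/h - 1/b) * y)
    simpa [L2] using this
  have h3 : HasDerivAt (fun t => L3 h t y) 0 x := by
    simpa [L3] using hasDerivAt_const x (y / h)
  have H := ((((h1.add (((h1.pow 2).mul h2))).add
      ((h1.pow 2).mul h3)).sub (h1.mul (h2.pow 2))).sub (h1.mul (h3.pow 2)))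
  have heq : (fun t => N1 a h b t y) =
      fun t => L1 a b t y + (L1 a b t y)^2 * L2 a h b t y + (L1 a b t y)^2 * L3 h t y
        - L1 a b t y * (L2 a h b t y)^2 - L1 a b t y * (L3 h t y)^2 := by
    funext t; simp [N1]
  rw [heq]
  refine H.congr_deriv ?_
  simp only [Pi.pow_apply]
  ring

lemma hasDerivAt_N1_y (a h b x y : ℝ) :
    HasDerivAt (fun t => N1 a h b x t)
      (-(1/b) + (2 * L1 a b x y * (-(1/b)) * L2 a h b x y + (L1 a b x y)^2 * (-(1/h - 1/b)))
        + (2 * L1 a b x y * (-(1/b)) * L3 h x y + (L1 a b x y)^2 * (1/h))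
        - ((-(1/b)) * (L2 a h b x y)^2 + L1 a b x y * (2 * L2 a h b x y * (-(1/h - 1/b))))
        - ((-(1/b)) * (L3 h x y)^2 + L1 a b x y * (2 * L3 h x y * (1/h)))) y := by
  have h1 : HasDerivAt (fun t => L1 a b x t) (-(1/b)) y := by
    have := ((hasDerivAt_id y).div_const b).const_sub (1 - x / a)
    have h' : (fun t : ℝ => 1 - x / a - t / b) = fun t : ℝ => (1 - x / a) - t / b := by
      funext t; ring
    simpa [L1, h'] using this
  have h2 : HasDerivAt (fun t => L2 a h b x t) (-(1/h - 1/b)) y := by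
    have := ((hasDerivAt_id y).const_mul (1/h - 1/b)).const_sub (x / a)
    simpa [L2, mul_comm] using this
  have h3 : HasDerivAt (fun t => L3 h x t) (1/h) y := by
    simpa [L3] using (hasDerivAt_id y).div_const h
  have H := ((((h1.add (((h1.pow 2).mul h2))).add
      ((h1.pow 2).mul h3)).sub (h1.mul (h2.pow 2))).sub (h1.mul (h3.pow 2)))
  have heq : (fun t => N1 a h b x t) =
      fun t => L1 a b x t + (L1 a b x t)^2 * L2 a h b x t + (L1 a b x t)^2 * L3 h x t
        - L1 a b x t * (L2 a h b x t)^2 - L1 a b x t * (L3 h x t)^2 := by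
    funext t; simp [N1]
  rw [heq]
  refine H.congr_deriv ?_
  simp only [Pi.pow_apply]
  ring

/-- Kronecker delta property of the deflection shape function `N1` at the nodes
`P1 = (0,0)`, `P2 = (a,0)`, `P3 = (a(1-h/b), h)`. -/
theorem N1_kronecker_delta (a h b : ℝ) (ha : 0 < a) (hh : 0 < h) (hb : h ≤ b) :
    N1 a h b 0 0 = 1 ∧ N1 a h b a 0 = 0 ∧ N1 a h b (a * (1 - h / b)) h = 0 ∧
    pdx (N1 a h b) 0 0 = 0 ∧ pdx (N1 a h b) a 0 = 0 ∧
      pdx (N1 a h b) (a * (1 - h / b)) h = 0 ∧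
    pdy (N1 a h b) 0 0 = 0 ∧ pdy (N1 a h b) a 0 = 0 ∧
      pdy (N1 a h b) (a * (1 - h / b)) h = 0 := by
  have ha' : a ≠ 0 := ha.ne'
  have hh' : h ≠ 0 := hh.ne'
  have hb0 : (0:ℝ) < b := lt_of_lt_of_le hh hb
  have hb' : b ≠ 0 := hb0.ne'
  refine ⟨?_, ?_, ?_, ?_, ?_, ?_, ?_, ?_, ?_⟩
  · simp [N1, L1, L2, L3]
  · simp [N1, L1, L2, L3, ha']
  · have hL1 : L1 a b (a * (1 - h / b)) h = 0 := by
      simp only [L1]; field_simp; ring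
    simp [N1, hL1]
  · rw [pdx, (hasDerivAt_N1_x a h b 0 0).deriv]
    simp [L1, L2, L3]
  · rw [pdx, (hasDerivAt_N1_x a h b a 0).deriv]
    simp [L1, L2, L3, ha']
  · rw [pdx, (hasDerivAt_N1_x a h b (a * (1 - h / b)) h).deriv]
    simp only [L1, L2, L3]
    field_simp
    ring
  · rw [pdy, (hasDerivAt_N1_y a h b 0 0).deriv]
    simp [L1, L2, L3]
    field_simp
    ring
  · rw [pdy, (hasDerivAt_N1_y a h b a 0).deriv]
    simp [L1, L2, L3, ha']
  · rw [pdy, (hasDerivAt_N1_y a h b (a * (1 - h / b)) h).deriv]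
    simp only [L1, L2, L3]
    field_simp
    ring
end
end

section
/- The rotational shape function Nx1 satisfies the Kronecker delta property: Nx1(Pj) = 0 for j = 1,2,3; ∂Nx1/∂x(Pj) = 0 for j = 1,2,3; ∂Nx1/∂y(P1) = 1; and ∂Nx1/∂y(P2) = ∂Nx1/∂y(P3) = 0. -/
noncomputable section

/-- Rotational shape function `Nx1 = h·(L1²L3 + ½L1L2L3)`. -/
def Nx1 (a h b : ℝ) (x y : ℝ) : ℝ :=
  h * ((L1 a b x y) ^ 2 * L3 h x y + (1 / 2) * L1 a b x y * L2 a h b x y * L3 h x y)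

private lemma deriv_cubic (A B C D x : ℝ) :
    deriv (fun t => A + B * t + C * t ^ 2 + D * t ^ 3) x
      = B + 2 * C * x + 3 * D * x ^ 2 := by
  have h1 : HasDerivAt (fun t : ℝ => A + B * t + C * t ^ 2 + D * t ^ 3)
      (0 + B * 1 + C * ((2 : ℕ) * x ^ (2 - 1)) + D * ((3 : ℕ) * x ^ (3 - 1))) x := by
    exact (((hasDerivAt_const x A).add ((hasDerivAt_id x).const_mul B)).add
      ((hasDerivAt_pow 2 x).const_mul C)).add ((hasDerivAt_pow 3 x).const_mul D)
  rw [h1.deriv]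
  push_cast
  ring

set_option maxHeartbeats 1000000 in
/-- Kronecker delta property of the rotational shape function `Nx1` at the nodes
`P1 = (0,0)`, `P2 = (a,0)`, `P3 = (a(1-h/b), h)`. -/
theorem Nx1_kronecker_delta (a h b : ℝ) (ha : 0 < a) (hh : 0 < h) (hb : h ≤ b) :
    (Nx1 a h b 0 0 = 0 ∧ Nx1 a h b a 0 = 0 ∧ Nx1 a h b (a * (1 - h / b)) h = 0) ∧
    (pdx (Nx1 a h b) 0 0 = 0 ∧ pdx (Nx1 a h b) a 0 = 0 ∧
      pdx (Nx1 a h b) (a * (1 - h / b)) h = 0) ∧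
    pdy (Nx1 a h b) 0 0 = 1 ∧ pdy (Nx1 a h b) a 0 = 0 ∧
      pdy (Nx1 a h b) (a * (1 - h / b)) h = 0 := by
  have ha' : a ≠ 0 := ne_of_gt ha
  have hh' : h ≠ 0 := ne_of_gt hh
  have hb0 : (0:ℝ) < b := lt_of_lt_of_le hh hb
  have hb' : b ≠ 0 := ne_of_gt hb0
  have hzero : ∀ x : ℝ, Nx1 a h b x 0 = 0 := by
    intro x; simp [Nx1, L3]
  refine ⟨⟨hzero 0, hzero a, ?_⟩, ⟨?_, ?_, ?_⟩, ?_, ?_, ?_⟩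
  · have hL1 : L1 a b (a * (1 - h / b)) h = 0 := by
      unfold L1; field_simp; ring
    simp [Nx1, hL1]
  · unfold pdx
    have : (fun t => Nx1 a h b t 0) = fun _ => (0:ℝ) := by
      funext t; exact hzero t
    rw [this, deriv_const]
  · unfold pdx
    have : (fun t => Nx1 a h b t 0) = fun _ => (0:ℝ) := by
      funext t; exact hzero t
    rw [this, deriv_const]
  · unfold pdx
    have e : (fun t => Nx1 a h b t h)
        = fun t => (h / 2) * (1 - h / b) ^ 2 + (-(h / a) * (1 - h / b)) * t
            + (h / (2 * a ^ 2)) * t ^ 2 + 0 * t ^ 3 := by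
      funext t; unfold Nx1 L1 L2 L3; field_simp; ring
    rw [e, deriv_cubic]
    field_simp
    ring
  · unfold pdy
    have e : (fun t => Nx1 a h b 0 t)
        = fun t => 0 + 1 * t + (-2 / b - (1 / h - 1 / b) / 2) * t ^ 2
            + (1 / b ^ 2 + (1 / h - 1 / b) / (2 * b)) * t ^ 3 := by
      funext t; unfold Nx1 L1 L2 L3; field_simp; ring
    rw [e, deriv_cubic]; ring
  · unfold pdy
    have e : (fun t => Nx1 a h b a t)
        = fun t => 0 + 0 * t + (-(1 / (2 * b))) * t ^ 2
            + (1 / b ^ 2 + (1 / h - 1 / b) / (2 * b)) * t ^ 3 := by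
      funext t; unfold Nx1 L1 L2 L3; field_simp; ring
    rw [e, deriv_cubic]; ring
  · unfold pdy
    have e : (fun t => Nx1 a h b (a * (1 - h / b)) t)
        = fun t => 0 + (h ^ 2 / b ^ 2 + (h / b) * (1 - h / b) / 2) * t
            + (-(h / b ^ 2) - 1 / b) * t ^ 2
            + (1 / (2 * b ^ 2) + 1 / (2 * b * h)) * t ^ 3 := by
      funext t; unfold Nx1 L1 L2 L3; field_simp; ring
    rw [e, deriv_cubic]; field_simp; ring
end
end

section
/- The element interpolation is exact at the nodes: for any real numbers w1, w2, w3, θx1, θx2, θx3, θy1, θy2, θy3, the function w(x,y) = Σᵢ₌₁³ Nᵢ(x,y)·wᵢ + Σᵢ₌₁³ Nxᵢ(x,y)·θxᵢ + Σᵢ₌₁³ Nyᵢ(x,y)·θyᵢ satisfies, for each i = 1,2,3: w(Pᵢ) = wᵢ, ∂w/∂y(Pᵢ) = θxᵢ, and ∂w/∂x(Pᵢ) = -θyᵢ. -/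
noncomputable section

/-- Deflection shape function `N2 = L2 + L2²L3 + L2²L1 - L2L3² - L2L1²`. -/
def N2 (a h b : ℝ) (x y : ℝ) : ℝ :=
  L2 a h b x y + (L2 a h b x y) ^ 2 * L3 h x y + (L2 a h b x y) ^ 2 * L1 a b x y
    - L2 a h b x y * (L3 h x y) ^ 2 - L2 a h b x y * (L1 a b x y) ^ 2

/-- Deflection shape function `N3 = L3 + L3²L1 + L3²L2 - L3L1² - L3L2²`. -/
def N3 (a h b : ℝ) (x y : ℝ) : ℝ :=
  L3 h x y + (L3 h x y) ^ 2 * L1 a b x y + (L3 h x y) ^ 2 * L2 a h b x y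
    - L3 h x y * (L1 a b x y) ^ 2 - L3 h x y * (L2 a h b x y) ^ 2

/-- Rotational shape function
`Ny1 = -a·(L1²L2 + ½L1L2L3) - a·(1 - h/b)·(L1²L3 + ½L1L2L3)`. -/
def Ny1 (a h b : ℝ) (x y : ℝ) : ℝ :=
  -a * ((L1 a b x y) ^ 2 * L2 a h b x y + (1 / 2) * L1 a b x y * L2 a h b x y * L3 h x y)
    - a * (1 - h / b) *
      ((L1 a b x y) ^ 2 * L3 h x y + (1 / 2) * L1 a b x y * L2 a h b x y * L3 h x y)

/-- Rotational shape function `Nx2 = h·(L2²L3 + ½L1L2L3)`. -/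
def Nx2 (a h b : ℝ) (x y : ℝ) : ℝ :=
  h * ((L2 a h b x y) ^ 2 * L3 h x y + (1 / 2) * L1 a b x y * L2 a h b x y * L3 h x y)

/-- Rotational shape function `Nx3 = -h·(L3²L1 + L2L3² + L1L2L3)`. -/
def Nx3 (a h b : ℝ) (x y : ℝ) : ℝ :=
  -h * ((L3 h x y) ^ 2 * L1 a b x y + L2 a h b x y * (L3 h x y) ^ 2
    + L1 a b x y * L2 a h b x y * L3 h x y)

/-- Rotational shape function
`Ny2 = (a·h/b)·(L2²L3 + ½L1L2L3) + a·(L1L2² + ½L1L2L3)`. -/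
def Ny2 (a h b : ℝ) (x y : ℝ) : ℝ :=
  (a * h / b) * ((L2 a h b x y) ^ 2 * L3 h x y
      + (1 / 2) * L1 a b x y * L2 a h b x y * L3 h x y)
    + a * (L1 a b x y * (L2 a h b x y) ^ 2
      + (1 / 2) * L1 a b x y * L2 a h b x y * L3 h x y)

/-- Rotational shape function
`Ny3 = a·(1 - h/b)·(L3²L1 + ½L1L2L3) - (a·h/b)·(L2L3² + ½L1L2L3)`. -/
def Ny3 (a h b : ℝ) (x y : ℝ) : ℝ :=
  a * (1 - h / b) * ((L3 h x y) ^ 2 * L1 a b x y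
      + (1 / 2) * L1 a b x y * L2 a h b x y * L3 h x y)
    - (a * h / b) * (L2 a h b x y * (L3 h x y) ^ 2
      + (1 / 2) * L1 a b x y * L2 a h b x y * L3 h x y)

lemma cubic_deriv (c0 c1 c2 c3 t : ℝ) :
    deriv (fun s : ℝ => c0 + c1 * s + c2 * s ^ 2 + c3 * s ^ 3) t
      = c1 + 2 * c2 * t + 3 * c3 * t ^ 2 := by
  have H : HasDerivAt (fun s : ℝ => c0 + c1 * s + c2 * s ^ 2 + c3 * s ^ 3)
      (0 + c1 * 1 + (c2 * ((2 : ℕ) * t ^ (2 - 1))) + (c3 * ((3 : ℕ) * t ^ (3 - 1)))) t := by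
    exact (((hasDerivAt_const t c0).add ((hasDerivAt_id' t).const_mul c1)).add
      ((hasDerivAt_pow 2 t).const_mul c2)).add ((hasDerivAt_pow 3 t).const_mul c3)
  rw [H.deriv]; push_cast; ring

set_option maxHeartbeats 4000000 in
set_option maxRecDepth 100000 in
/-- The element interpolation
`w = Σ Nᵢ wᵢ + Σ Nxᵢ θxᵢ + Σ Nyᵢ θyᵢ` is exact at the nodes:
`w(Pᵢ) = wᵢ`, `∂w/∂y(Pᵢ) = θxᵢ`, `∂w/∂x(Pᵢ) = -θyᵢ`. -/
theorem element_interpolation_exact_at_nodes (a h b : ℝ)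
    (ha : 0 < a) (hh : 0 < h) (hb : h ≤ b)
    (w1 w2 w3 θx1 θx2 θx3 θy1 θy2 θy3 : ℝ) :
    let w : ℝ → ℝ → ℝ := fun x y =>
      N1 a h b x y * w1 + N2 a h b x y * w2 + N3 a h b x y * w3 +
      Nx1 a h b x y * θx1 + Nx2 a h b x y * θx2 + Nx3 a h b x y * θx3 +
      Ny1 a h b x y * θy1 + Ny2 a h b x y * θy2 + Ny3 a h b x y * θy3
    (w 0 0 = w1 ∧ w a 0 = w2 ∧ w (a * (1 - h / b)) h = w3) ∧
    (pdy w 0 0 = θx1 ∧ pdy w a 0 = θx2 ∧ pdy w (a * (1 - h / b)) h = θx3) ∧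
    (pdx w 0 0 = -θy1 ∧ pdx w a 0 = -θy2 ∧ pdx w (a * (1 - h / b)) h = -θy3) := by
  intro w
  have ha' : a ≠ 0 := ne_of_gt ha
  have hh' : h ≠ 0 := ne_of_gt hh
  have hb' : b ≠ 0 := ne_of_gt (lt_of_lt_of_le hh hb)
  have hA : a * a⁻¹ = (1:ℝ) := mul_inv_cancel₀ ha'
  have hH : h * h⁻¹ = (1:ℝ) := mul_inv_cancel₀ hh'
  have hB : b * b⁻¹ = (1:ℝ) := mul_inv_cancel₀ hb'
  refine ⟨⟨?_, ?_, ?_⟩, ⟨?_, ?_, ?_⟩, ⟨?_, ?_, ?_⟩⟩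
  · simp only [w, N1, N2, N3, Nx1, Nx2, Nx3, Ny1, Ny2, Ny3, L1, L2, L3]
    linear_combination (norm := ring1) (0:ℝ) * hA + (0:ℝ) * hH + (0:ℝ) * hB
  · simp only [w, N1, N2, N3, Nx1, Nx2, Nx3, Ny1, Ny2, Ny3, L1, L2, L3]
    linear_combination (norm := ring1) ((1)*w2 + (-1)*w1 + (1)*a*a⁻¹*w2 + (-1)*a*a⁻¹*w1 + (1)*a^2*a⁻¹*θy1 + (-2)*a^2*a⁻¹^2*w2 + (2)*a^2*a⁻¹^2*w1 + (-1)*a^3*a⁻¹^2*θy2 + (-1)*a^3*a⁻¹^2*θy1) * hA + (0:ℝ) * hH + (0:ℝ) * hB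
  · simp only [w, N1, N2, N3, Nx1, Nx2, Nx3, Ny1, Ny2, Ny3, L1, L2, L3]
    linear_combination (norm := ring1) ((1)*w2 + (-1)*w1 + (-3)*h^2*b⁻¹^2*w2 + (3)*h^2*b⁻¹^2*w1 + (1)*h^2*h⁻¹*θx2 + (-1)*h^2*h⁻¹*θx1 + (-2)*h^2*h⁻¹*b⁻¹*w3 + (4)*h^2*h⁻¹*b⁻¹*w2 + (-2)*h^2*h⁻¹*b⁻¹*w1 + (2)*h^2*h⁻¹^2*w3 + (-4)*h^2*h⁻¹^2*w2 + (2)*h^2*h⁻¹^2*w1 + (2)*h^3*b⁻¹^3*w2 + (-2)*h^3*b⁻¹^3*w1 + (1)*h^3*h⁻¹*b⁻¹*θx3 + (-1/2)*h^3*h⁻¹*b⁻¹*θx2 + (3/2)*h^3*h⁻¹*b⁻¹*θx1 + (2)*h^3*h⁻¹*b⁻¹^2*w3 + (-4)*h^3*h⁻¹*b⁻¹^2*w2 + (2)*h^3*h⁻¹*b⁻¹^2*w1 + (-1)*h^3*h⁻¹^2*θx3 + (-3/2)*h^3*h⁻¹^2*θx2 + (1/2)*h^3*h⁻¹^2*θx1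 + (-2)*h^3*h⁻¹^2*b⁻¹*w3 + (4)*h^3*h⁻¹^2*b⁻¹*w2 + (-2)*h^3*h⁻¹^2*b⁻¹*w1 + (-1)*h^4*h⁻¹*b⁻¹^2*θx3 + (-1/2)*h^4*h⁻¹*b⁻¹^2*θx2 + (-1/2)*h^4*h⁻¹*b⁻¹^2*θx1 + (1)*h^4*h⁻¹^2*b⁻¹*θx3 + (3/2)*h^4*h⁻¹^2*b⁻¹*θx2 + (-1/2)*h^4*h⁻¹^2*b⁻¹*θx1 + (1)*a*a⁻¹*w2 + (-1)*a*a⁻¹*w1 + (1)*a*h*b⁻¹*θy1 + (-6)*a*h*a⁻¹*b⁻¹*w2 + (6)*a*h*a⁻¹*b⁻¹*w1 + (-2)*a*h*a⁻¹*h⁻¹*w3 + (4)*a*h*a⁻¹*h⁻¹*w2 + (-2)*a*h*a⁻¹*h⁻¹*w1 + (-1)*a*h^2*b⁻¹^2*θy2 + (-2)*a*h^2*b⁻¹^2*θy1 + (-1/2)*a*h^2*h⁻¹*b⁻¹*θy3 + (5/2)*a*h^2*h⁻¹*b⁻¹*θy2 + (-1/2)*a*h^2*h⁻¹^2*θy3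 + (-1/2)*a*h^2*h⁻¹^2*θy2 + (-1)*a*h^2*h⁻¹^2*θy1 + (9)*a*h^2*a⁻¹*b⁻¹^2*w2 + (-9)*a*h^2*a⁻¹*b⁻¹^2*w1 + (1)*a*h^2*a⁻¹*h⁻¹*θx3 + (1/2)*a*h^2*a⁻¹*h⁻¹*θx2 + (1/2)*a*h^2*a⁻¹*h⁻¹*θx1 + (4)*a*h^2*a⁻¹*h⁻¹*b⁻¹*w3 + (-8)*a*h^2*a⁻¹*h⁻¹*b⁻¹*w2 + (4)*a*h^2*a⁻¹*h⁻¹*b⁻¹*w1 + (1)*a*h^3*b⁻¹^3*θy2 + (1)*a*h^3*b⁻¹^3*θy1 + (3/2)*a*h^3*h⁻¹*b⁻¹^2*θy3 + (-2)*a*h^3*h⁻¹*b⁻¹^2*θy2 + (1/2)*a*h^3*h⁻¹*b⁻¹^2*θy1 + (-1/2)*a*h^3*h⁻¹^2*b⁻¹*θy3 + (-1)*a*h^3*h⁻¹^2*b⁻¹*θy2 + (3/2)*a*h^3*h⁻¹^2*b⁻¹*θy1 + (-4)*a*h^3*a⁻¹*b⁻¹^3*w2 + (4)*a*h^3*a⁻¹*b⁻¹^3*w1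 + (-2)*a*h^3*a⁻¹*h⁻¹*b⁻¹*θx3 + (-1)*a*h^3*a⁻¹*h⁻¹*b⁻¹*θx2 + (-1)*a*h^3*a⁻¹*h⁻¹*b⁻¹*θx1 + (-2)*a*h^3*a⁻¹*h⁻¹*b⁻¹^2*w3 + (4)*a*h^3*a⁻¹*h⁻¹*b⁻¹^2*w2 + (-2)*a*h^3*a⁻¹*h⁻¹*b⁻¹^2*w1 + (-1)*a*h^4*h⁻¹*b⁻¹^3*θy3 + (-1/2)*a*h^4*h⁻¹*b⁻¹^3*θy2 + (-1/2)*a*h^4*h⁻¹*b⁻¹^3*θy1 + (1)*a*h^4*h⁻¹^2*b⁻¹^2*θy3 + (3/2)*a*h^4*h⁻¹^2*b⁻¹^2*θy2 + (-1/2)*a*h^4*h⁻¹^2*b⁻¹^2*θy1 + (1)*a*h^4*a⁻¹*h⁻¹*b⁻¹^2*θx3 + (1/2)*a*h^4*a⁻¹*h⁻¹*b⁻¹^2*θx2 + (1/2)*a*h^4*a⁻¹*h⁻¹*b⁻¹^2*θx1 + (1)*a^2*a⁻¹*θy1 + (-2)*a^2*a⁻¹^2*w2 + (2)*a^2*a⁻¹^2*w1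 + (-2)*a^2*h*a⁻¹*b⁻¹*θy2 + (-4)*a^2*h*a⁻¹*b⁻¹*θy1 + (-1/2)*a^2*h*a⁻¹*h⁻¹*θy3 + (3/2)*a^2*h*a⁻¹*h⁻¹*θy2 + (1)*a^2*h*a⁻¹*h⁻¹*θy1 + (6)*a^2*h*a⁻¹^2*b⁻¹*w2 + (-6)*a^2*h*a⁻¹^2*b⁻¹*w1 + (4)*a^2*h^2*a⁻¹*b⁻¹^2*θy2 + (5)*a^2*h^2*a⁻¹*b⁻¹^2*θy1 + (2)*a^2*h^2*a⁻¹*h⁻¹*b⁻¹*θy3 + (-5/2)*a^2*h^2*a⁻¹*h⁻¹*b⁻¹*θy2 + (-3/2)*a^2*h^2*a⁻¹*h⁻¹*b⁻¹*θy1 + (-6)*a^2*h^2*a⁻¹^2*b⁻¹^2*w2 + (6)*a^2*h^2*a⁻¹^2*b⁻¹^2*w1 + (-2)*a^2*h^3*a⁻¹*b⁻¹^3*θy2 + (-2)*a^2*h^3*a⁻¹*b⁻¹^3*θy1 + (-5/2)*a^2*h^3*a⁻¹*h⁻¹*b⁻¹^2*θy3 + (1/2)*a^2*h^3*a⁻¹*h⁻¹*b⁻¹^2*θy2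 + (2)*a^2*h^3*a⁻¹^2*b⁻¹^3*w2 + (-2)*a^2*h^3*a⁻¹^2*b⁻¹^3*w1 + (1)*a^2*h^4*a⁻¹*h⁻¹*b⁻¹^3*θy3 + (1/2)*a^2*h^4*a⁻¹*h⁻¹*b⁻¹^3*θy2 + (1/2)*a^2*h^4*a⁻¹*h⁻¹*b⁻¹^3*θy1 + (-1)*a^3*a⁻¹^2*θy2 + (-1)*a^3*a⁻¹^2*θy1 + (3)*a^3*h*a⁻¹^2*b⁻¹*θy2 + (3)*a^3*h*a⁻¹^2*b⁻¹*θy1 + (-3)*a^3*h^2*a⁻¹^2*b⁻¹^2*θy2 + (-3)*a^3*h^2*a⁻¹^2*b⁻¹^2*θy1 + (1)*a^3*h^3*a⁻¹^2*b⁻¹^3*θy2 + (1)*a^3*h^3*a⁻¹^2*b⁻¹^3*θy1) * hA + ((1)*w3 + (-1)*w2 + (1)*h*h⁻¹*w3 + (-1)*h*h⁻¹*w2 + (-1)*h^2*h⁻¹*θx2 + (-2)*h^2*h⁻¹^2*w3 + (2)*h^2*h⁻¹^2*w2 + (1)*h^3*h⁻¹^2*θx3 + (1)*h^3*h⁻¹^2*θx2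 + (-1)*a*h^2*h⁻¹*b⁻¹*θy2 + (1)*a*h^3*h⁻¹^2*b⁻¹*θy3 + (1)*a*h^3*h⁻¹^2*b⁻¹*θy2) * hH + (0:ℝ) * hB
  · show deriv (fun s => w (0:ℝ) s) (0:ℝ) = _
    have e : (fun s => w (0:ℝ) s) = (fun s : ℝ => ((1)*w1) + ((1)*θx1) * s + ((-1)*b⁻¹*θx3 + (1/2)*b⁻¹*θx2 + (-3/2)*b⁻¹*θx1 + (3)*b⁻¹^2*w2 + (-3)*b⁻¹^2*w1 + (-1/2)*h⁻¹*θx2 + (-1/2)*h⁻¹*θx1 + (2)*h⁻¹*b⁻¹*w3 + (-4)*h⁻¹*b⁻¹*w2 + (2)*h⁻¹*b⁻¹*w1 + (1)*h⁻¹^2*w3 + (1)*h⁻¹^2*w2 + (-2)*h⁻¹^2*w1 + (-1)*a*b⁻¹^2*θy3 + (3/2)*a*b⁻¹^2*θy2 + (1/2)*a*b⁻¹^2*θy1 + (1/2)*a*h⁻¹*b⁻¹*θy3 + (-2)*a*h⁻¹*b⁻¹*θy2 + (-3/2)*a*h⁻¹*b⁻¹*θy1 + (1/2)*a*h⁻¹^2*θy3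 + (1/2)*a*h⁻¹^2*θy2 + (1)*a*h⁻¹^2*θy1) * s ^ 2 + ((1)*b⁻¹^2*θx3 + (1/2)*b⁻¹^2*θx2 + (1/2)*b⁻¹^2*θx1 + (-2)*b⁻¹^3*w2 + (2)*b⁻¹^3*w1 + (-1)*h⁻¹*b⁻¹*θx3 + (-3/2)*h⁻¹*b⁻¹*θx2 + (1/2)*h⁻¹*b⁻¹*θx1 + (-2)*h⁻¹*b⁻¹^2*w3 + (4)*h⁻¹*b⁻¹^2*w2 + (-2)*h⁻¹*b⁻¹^2*w1 + (1)*h⁻¹^2*θx3 + (1)*h⁻¹^2*θx2 + (2)*h⁻¹^2*b⁻¹*w3 + (-4)*h⁻¹^2*b⁻¹*w2 + (2)*h⁻¹^2*b⁻¹*w1 + (-2)*h⁻¹^3*w3 + (2)*h⁻¹^3*w2 + (1)*a*b⁻¹^3*θy3 + (-1/2)*a*b⁻¹^3*θy2 + (-1/2)*a*b⁻¹^3*θy1 + (-3/2)*a*h⁻¹*b⁻¹^2*θy3 + (3/2)*a*h⁻¹*b⁻¹^2*θy1 + (1/2)*a*h⁻¹^2*b⁻¹*θy3 + (1/2)*a*h⁻¹^2*b⁻¹*θy2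 + (-1)*a*h⁻¹^2*b⁻¹*θy1) * s ^ 3) := by
      funext s; simp only [w, N1, N2, N3, Nx1, Nx2, Nx3, Ny1, Ny2, Ny3, L1, L2, L3]; linear_combination (norm := ring1) (0:ℝ) * hA + ((1)*s*θx1 + (-1)*b⁻¹*s^2*θx3 + (1/2)*b⁻¹*s^2*θx2 + (-3/2)*b⁻¹*s^2*θx1 + (1)*b⁻¹^2*s^3*θx3 + (1/2)*b⁻¹^2*s^3*θx2 + (1/2)*b⁻¹^2*s^3*θx1 + (-1/2)*h⁻¹*s^2*θx2 + (-1/2)*h⁻¹*s^2*θx1 + (-1)*h⁻¹*b⁻¹*s^3*θx3 + (-3/2)*h⁻¹*b⁻¹*s^3*θx2 + (1/2)*h⁻¹*b⁻¹*s^3*θx1 + (1)*h⁻¹^2*s^3*θx3 + (1)*h⁻¹^2*s^3*θx2 + (1)*a*b⁻¹*s*θy1 + (-1)*a*b⁻¹^2*s^2*θy3 + (1/2)*a*b⁻¹^2*s^2*θy2 + (-3/2)*a*b⁻¹^2*s^2*θy1 + (1)*a*b⁻¹^3*s^3*θy3 + (1/2)*a*b⁻¹^3*s^3*θy2 + (1/2)*a*b⁻¹^3*s^3*θy1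 + (-1/2)*a*h⁻¹*b⁻¹*s^2*θy2 + (-1/2)*a*h⁻¹*b⁻¹*s^2*θy1 + (-1)*a*h⁻¹*b⁻¹^2*s^3*θy3 + (-3/2)*a*h⁻¹*b⁻¹^2*s^3*θy2 + (1/2)*a*h⁻¹*b⁻¹^2*s^3*θy1 + (1)*a*h⁻¹^2*b⁻¹*s^3*θy3 + (1)*a*h⁻¹^2*b⁻¹*s^3*θy2) * hH + (0:ℝ) * hB
    rw [e, cubic_deriv]
    linear_combination (norm := ring1) (0:ℝ) * hA + (0:ℝ) * hH + (0:ℝ) * hB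
  · show deriv (fun s => w a s) (0:ℝ) = _
    have e : (fun s => w a s) = (fun s : ℝ => ((1)*w2) + ((1)*θx2) * s + ((1)*b⁻¹*θx3 + (3/2)*b⁻¹*θx2 + (-1/2)*b⁻¹*θx1 + (-3)*b⁻¹^2*w2 + (3)*b⁻¹^2*w1 + (-1)*h⁻¹*θx3 + (-2)*h⁻¹*θx2 + (-2)*h⁻¹*b⁻¹*w3 + (4)*h⁻¹*b⁻¹*w2 + (-2)*h⁻¹*b⁻¹*w1 + (3)*h⁻¹^2*w3 + (-3)*h⁻¹^2*w2 + (1)*a*b⁻¹^2*θy3 + (-1/2)*a*b⁻¹^2*θy2 + (-3/2)*a*b⁻¹^2*θy1 + (-3/2)*a*h⁻¹*b⁻¹*θy3 + (-1/2)*a*h⁻¹*b⁻¹*θy2 + (1)*a*h⁻¹*b⁻¹*θy1) * s ^ 2 + ((1)*b⁻¹^2*θx3 + (1/2)*b⁻¹^2*θx2 + (1/2)*b⁻¹^2*θx1 + (-2)*b⁻¹^3*w2 + (2)*b⁻¹^3*w1 + (-1)*h⁻¹*b⁻¹*θx3 + (-3/2)*h⁻¹*b⁻¹*θx2 + (1/2)*h⁻¹*b⁻¹*θx1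 + (-2)*h⁻¹*b⁻¹^2*w3 + (4)*h⁻¹*b⁻¹^2*w2 + (-2)*h⁻¹*b⁻¹^2*w1 + (1)*h⁻¹^2*θx3 + (1)*h⁻¹^2*θx2 + (2)*h⁻¹^2*b⁻¹*w3 + (-4)*h⁻¹^2*b⁻¹*w2 + (2)*h⁻¹^2*b⁻¹*w1 + (-2)*h⁻¹^3*w3 + (2)*h⁻¹^3*w2 + (1)*a*b⁻¹^3*θy3 + (-1/2)*a*b⁻¹^3*θy2 + (-1/2)*a*b⁻¹^3*θy1 + (-3/2)*a*h⁻¹*b⁻¹^2*θy3 + (3/2)*a*h⁻¹*b⁻¹^2*θy1 + (1/2)*a*h⁻¹^2*b⁻¹*θy3 + (1/2)*a*h⁻¹^2*b⁻¹*θy2 + (-1)*a*h⁻¹^2*b⁻¹*θy1) * s ^ 3) := by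
      funext s; simp only [w, N1, N2, N3, Nx1, Nx2, Nx3, Ny1, Ny2, Ny3, L1, L2, L3]; linear_combination (norm := ring1) ((1)*w2 + (-1)*w1 + (-6)*b⁻¹^2*s^2*w2 + (6)*b⁻¹^2*s^2*w1 + (-4)*h⁻¹*b⁻¹*s^2*w3 + (8)*h⁻¹*b⁻¹*s^2*w2 + (-4)*h⁻¹*b⁻¹*s^2*w1 + (2)*h⁻¹^2*s^2*w3 + (-4)*h⁻¹^2*s^2*w2 + (2)*h⁻¹^2*s^2*w1 + (1)*h*h⁻¹*s*θx2 + (-1)*h*h⁻¹*s*θx1 + (2)*h*h⁻¹*b⁻¹*s^2*θx3 + (1)*h*h⁻¹*b⁻¹*s^2*θx2 + (1)*h*h⁻¹*b⁻¹*s^2*θx1 + (-1)*h*h⁻¹^2*s^2*θx3 + (-3/2)*h*h⁻¹^2*s^2*θx2 + (1/2)*h*h⁻¹^2*s^2*θx1 + (-1)*a*b⁻¹*s*θy2 + (1)*a*b⁻¹*s*θy1 + (-3)*a*b⁻¹^2*s^2*θy2 + (-3)*a*b⁻¹^2*s^2*θy1 + (-1)*a*h⁻¹*b⁻¹*s^2*θy3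 + (3)*a*h⁻¹*b⁻¹*s^2*θy2 + (2)*a*h⁻¹*b⁻¹*s^2*θy1 + (-1/2)*a*h⁻¹^2*s^2*θy3 + (-1/2)*a*h⁻¹^2*s^2*θy2 + (-1)*a*h⁻¹^2*s^2*θy1 + (1)*a*a⁻¹*w2 + (-1)*a*a⁻¹*w1 + (-6)*a*a⁻¹*b⁻¹*s*w2 + (6)*a*a⁻¹*b⁻¹*s*w1 + (-2)*a*a⁻¹*h⁻¹*s*w3 + (4)*a*a⁻¹*h⁻¹*s*w2 + (-2)*a*a⁻¹*h⁻¹*s*w1 + (1)*a*h*h⁻¹*b⁻¹*s*θy2 + (-1)*a*h*h⁻¹*b⁻¹*s*θy1 + (2)*a*h*h⁻¹*b⁻¹^2*s^2*θy3 + (1)*a*h*h⁻¹*b⁻¹^2*s^2*θy2 + (1)*a*h*h⁻¹*b⁻¹^2*s^2*θy1 + (-1)*a*h*h⁻¹^2*b⁻¹*s^2*θy3 + (-3/2)*a*h*h⁻¹^2*b⁻¹*s^2*θy2 + (1/2)*a*h*h⁻¹^2*b⁻¹*s^2*θy1 + (1)*a*h*a⁻¹*h⁻¹*s*θx3 + (1/2)*a*h*a⁻¹*h⁻¹*s*θx2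 + (1/2)*a*h*a⁻¹*h⁻¹*s*θx1 + (1)*a^2*a⁻¹*θy1 + (-3)*a^2*a⁻¹*b⁻¹*s*θy2 + (-3)*a^2*a⁻¹*b⁻¹*s*θy1 + (-1/2)*a^2*a⁻¹*h⁻¹*s*θy3 + (3/2)*a^2*a⁻¹*h⁻¹*s*θy2 + (1)*a^2*a⁻¹*h⁻¹*s*θy1 + (-2)*a^2*a⁻¹^2*w2 + (2)*a^2*a⁻¹^2*w1 + (1)*a^2*h*a⁻¹*h⁻¹*b⁻¹*s*θy3 + (1/2)*a^2*h*a⁻¹*h⁻¹*b⁻¹*s*θy2 + (1/2)*a^2*h*a⁻¹*h⁻¹*b⁻¹*s*θy1 + (-1)*a^3*a⁻¹^2*θy2 + (-1)*a^3*a⁻¹^2*θy1) * hA + ((1)*s*θx2 + (1)*b⁻¹*s^2*θx3 + (3/2)*b⁻¹*s^2*θx2 + (-1/2)*b⁻¹*s^2*θx1 + (1)*b⁻¹^2*s^3*θx3 + (1/2)*b⁻¹^2*s^3*θx2 + (1/2)*b⁻¹^2*s^3*θx1 + (-1)*h⁻¹*s^2*θx3 + (-2)*h⁻¹*s^2*θx2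 + (-1)*h⁻¹*b⁻¹*s^3*θx3 + (-3/2)*h⁻¹*b⁻¹*s^3*θx2 + (1/2)*h⁻¹*b⁻¹*s^3*θx1 + (1)*h⁻¹^2*s^3*θx3 + (1)*h⁻¹^2*s^3*θx2 + (1)*a*b⁻¹*s*θy2 + (1)*a*b⁻¹^2*s^2*θy3 + (3/2)*a*b⁻¹^2*s^2*θy2 + (-1/2)*a*b⁻¹^2*s^2*θy1 + (1)*a*b⁻¹^3*s^3*θy3 + (1/2)*a*b⁻¹^3*s^3*θy2 + (1/2)*a*b⁻¹^3*s^3*θy1 + (-1)*a*h⁻¹*b⁻¹*s^2*θy3 + (-2)*a*h⁻¹*b⁻¹*s^2*θy2 + (-1)*a*h⁻¹*b⁻¹^2*s^3*θy3 + (-3/2)*a*h⁻¹*b⁻¹^2*s^3*θy2 + (1/2)*a*h⁻¹*b⁻¹^2*s^3*θy1 + (1)*a*h⁻¹^2*b⁻¹*s^3*θy3 + (1)*a*h⁻¹^2*b⁻¹*s^3*θy2) * hH + (0:ℝ) * hB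
    rw [e, cubic_deriv]
    linear_combination (norm := ring1) (0:ℝ) * hA + (0:ℝ) * hH + (0:ℝ) * hB
  · show deriv (fun s => w (a * (1 - h / b)) s) h = _
    have e : (fun s => w (a * (1 - h / b)) s) = (fun s : ℝ => ((1)*w2 + (-3)*h^2*b⁻¹^2*w2 + (3)*h^2*b⁻¹^2*w1 + (2)*h^3*b⁻¹^3*w2 + (-2)*h^3*b⁻¹^3*w1 + (1)*a*h*b⁻¹*θy2 + (-2)*a*h^2*b⁻¹^2*θy2 + (-1)*a*h^2*b⁻¹^2*θy1 + (1)*a*h^3*b⁻¹^3*θy2 + (1)*a*h^3*b⁻¹^3*θy1) + ((1)*θx2 + (2)*b⁻¹*w3 + (-4)*b⁻¹*w2 + (2)*b⁻¹*w1 + (-1)*h*b⁻¹*θx3 + (-3/2)*h*b⁻¹*θx2 + (1/2)*h*b⁻¹*θx1 + (-2)*h*b⁻¹^2*w3 + (10)*h*b⁻¹^2*w2 + (-8)*h*b⁻¹^2*w1 + (1)*h^2*b⁻¹^2*θx3 + (1/2)*h^2*b⁻¹^2*θx2 + (1/2)*h^2*b⁻¹^2*θx1 + (-6)*h^2*b⁻¹^3*w2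 + (6)*h^2*b⁻¹^3*w1 + (1/2)*a*b⁻¹*θy3 + (-3/2)*a*b⁻¹*θy2 + (-1)*a*b⁻¹*θy1 + (-3/2)*a*h*b⁻¹^2*θy3 + (4)*a*h*b⁻¹^2*θy2 + (7/2)*a*h*b⁻¹^2*θy1 + (1)*a*h^2*b⁻¹^3*θy3 + (-5/2)*a*h^2*b⁻¹^3*θy2 + (-5/2)*a*h^2*b⁻¹^3*θy1) * s + ((2)*b⁻¹*θx3 + (3)*b⁻¹*θx2 + (-1)*b⁻¹*θx1 + (4)*b⁻¹^2*w3 + (-11)*b⁻¹^2*w2 + (7)*b⁻¹^2*w1 + (-1)*h⁻¹*θx3 + (-2)*h⁻¹*θx2 + (-4)*h⁻¹*b⁻¹*w3 + (8)*h⁻¹*b⁻¹*w2 + (-4)*h⁻¹*b⁻¹*w1 + (3)*h⁻¹^2*w3 + (-3)*h⁻¹^2*w2 + (-2)*h*b⁻¹^2*θx3 + (-1)*h*b⁻¹^2*θx2 + (-1)*h*b⁻¹^2*θx1 + (6)*h*b⁻¹^3*w2 + (-6)*h*b⁻¹^3*w1 + (3)*a*b⁻¹^2*θy3 + (-2)*a*b⁻¹^2*θy2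 + (-4)*a*b⁻¹^2*θy1 + (-1)*a*h⁻¹*b⁻¹*θy3 + (2)*a*h⁻¹*b⁻¹*θy1 + (-2)*a*h*b⁻¹^3*θy3 + (2)*a*h*b⁻¹^3*θy2 + (2)*a*h*b⁻¹^3*θy1) * s ^ 2 + ((1)*b⁻¹^2*θx3 + (1/2)*b⁻¹^2*θx2 + (1/2)*b⁻¹^2*θx1 + (-2)*b⁻¹^3*w2 + (2)*b⁻¹^3*w1 + (-1)*h⁻¹*b⁻¹*θx3 + (-3/2)*h⁻¹*b⁻¹*θx2 + (1/2)*h⁻¹*b⁻¹*θx1 + (-2)*h⁻¹*b⁻¹^2*w3 + (4)*h⁻¹*b⁻¹^2*w2 + (-2)*h⁻¹*b⁻¹^2*w1 + (1)*h⁻¹^2*θx3 + (1)*h⁻¹^2*θx2 + (2)*h⁻¹^2*b⁻¹*w3 + (-4)*h⁻¹^2*b⁻¹*w2 + (2)*h⁻¹^2*b⁻¹*w1 + (-2)*h⁻¹^3*w3 + (2)*h⁻¹^3*w2 + (1)*a*b⁻¹^3*θy3 + (-1/2)*a*b⁻¹^3*θy2 + (-1/2)*a*b⁻¹^3*θy1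 + (-3/2)*a*h⁻¹*b⁻¹^2*θy3 + (3/2)*a*h⁻¹*b⁻¹^2*θy1 + (1/2)*a*h⁻¹^2*b⁻¹*θy3 + (1/2)*a*h⁻¹^2*b⁻¹*θy2 + (-1)*a*h⁻¹^2*b⁻¹*θy1) * s ^ 3) := by
      funext s; simp only [w, N1, N2, N3, Nx1, Nx2, Nx3, Ny1, Ny2, Ny3, L1, L2, L3]; linear_combination (norm := ring1) ((1)*w2 + (-1)*w1 + (-6)*b⁻¹^2*s^2*w2 + (6)*b⁻¹^2*s^2*w1 + (-4)*h⁻¹*b⁻¹*s^2*w3 + (8)*h⁻¹*b⁻¹*s^2*w2 + (-4)*h⁻¹*b⁻¹*s^2*w1 + (2)*h⁻¹^2*s^2*w3 + (-4)*h⁻¹^2*s^2*w2 + (2)*h⁻¹^2*s^2*w1 + (6)*h*b⁻¹^2*s*w2 + (-6)*h*b⁻¹^2*s*w1 + (6)*h*b⁻¹^3*s^2*w2 + (-6)*h*b⁻¹^3*s^2*w1 + (1)*h*h⁻¹*s*θx2 + (-1)*h*h⁻¹*s*θx1 + (2)*h*h⁻¹*b⁻¹*s*w3 + (-4)*h*h⁻¹*b⁻¹*s*w2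 + (2)*h*h⁻¹*b⁻¹*s*w1 + (2)*h*h⁻¹*b⁻¹*s^2*θx3 + (1)*h*h⁻¹*b⁻¹*s^2*θx2 + (1)*h*h⁻¹*b⁻¹*s^2*θx1 + (4)*h*h⁻¹*b⁻¹^2*s^2*w3 + (-8)*h*h⁻¹*b⁻¹^2*s^2*w2 + (4)*h*h⁻¹*b⁻¹^2*s^2*w1 + (-1)*h*h⁻¹^2*s^2*θx3 + (-3/2)*h*h⁻¹^2*s^2*θx2 + (1/2)*h*h⁻¹^2*s^2*θx1 + (-2)*h*h⁻¹^2*b⁻¹*s^2*w3 + (4)*h*h⁻¹^2*b⁻¹*s^2*w2 + (-2)*h*h⁻¹^2*b⁻¹*s^2*w1 + (-3)*h^2*b⁻¹^2*w2 + (3)*h^2*b⁻¹^2*w1 + (-6)*h^2*b⁻¹^3*s*w2 + (6)*h^2*b⁻¹^3*s*w1 + (-1)*h^2*h⁻¹*b⁻¹*s*θx3 + (-3/2)*h^2*h⁻¹*b⁻¹*s*θx2 + (1/2)*h^2*h⁻¹*b⁻¹*s*θx1 + (-2)*h^2*h⁻¹*b⁻¹^2*s*w3 + (4)*h^2*h⁻¹*b⁻¹^2*s*w2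 + (-2)*h^2*h⁻¹*b⁻¹^2*s*w1 + (-2)*h^2*h⁻¹*b⁻¹^2*s^2*θx3 + (-1)*h^2*h⁻¹*b⁻¹^2*s^2*θx2 + (-1)*h^2*h⁻¹*b⁻¹^2*s^2*θx1 + (1)*h^2*h⁻¹^2*b⁻¹*s^2*θx3 + (3/2)*h^2*h⁻¹^2*b⁻¹*s^2*θx2 + (-1/2)*h^2*h⁻¹^2*b⁻¹*s^2*θx1 + (2)*h^3*b⁻¹^3*w2 + (-2)*h^3*b⁻¹^3*w1 + (1)*h^3*h⁻¹*b⁻¹^2*s*θx3 + (1/2)*h^3*h⁻¹*b⁻¹^2*s*θx2 + (1/2)*h^3*h⁻¹*b⁻¹^2*s*θx1 + (-1)*a*b⁻¹*s*θy2 + (1)*a*b⁻¹*s*θy1 + (-3)*a*b⁻¹^2*s^2*θy2 + (-3)*a*b⁻¹^2*s^2*θy1 + (-1)*a*h⁻¹*b⁻¹*s^2*θy3 + (3)*a*h⁻¹*b⁻¹*s^2*θy2 + (2)*a*h⁻¹*b⁻¹*s^2*θy1 + (-1/2)*a*h⁻¹^2*s^2*θy3 + (-1/2)*a*h⁻¹^2*s^2*θy2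 + (-1)*a*h⁻¹^2*s^2*θy1 + (1)*a*a⁻¹*w2 + (-1)*a*a⁻¹*w1 + (-6)*a*a⁻¹*b⁻¹*s*w2 + (6)*a*a⁻¹*b⁻¹*s*w1 + (-2)*a*a⁻¹*h⁻¹*s*w3 + (4)*a*a⁻¹*h⁻¹*s*w2 + (-2)*a*a⁻¹*h⁻¹*s*w1 + (1)*a*h*b⁻¹*θy2 + (4)*a*h*b⁻¹^2*s*θy2 + (2)*a*h*b⁻¹^2*s*θy1 + (3)*a*h*b⁻¹^3*s^2*θy2 + (3)*a*h*b⁻¹^3*s^2*θy1 + (1/2)*a*h*h⁻¹*b⁻¹*s*θy3 + (-1/2)*a*h*h⁻¹*b⁻¹*s*θy2 + (-2)*a*h*h⁻¹*b⁻¹*s*θy1 + (3)*a*h*h⁻¹*b⁻¹^2*s^2*θy3 + (-2)*a*h*h⁻¹*b⁻¹^2*s^2*θy2 + (-1)*a*h*h⁻¹*b⁻¹^2*s^2*θy1 + (-1/2)*a*h*h⁻¹^2*b⁻¹*s^2*θy3 + (-1)*a*h*h⁻¹^2*b⁻¹*s^2*θy2 + (3/2)*a*h*h⁻¹^2*b⁻¹*s^2*θy1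 + (12)*a*h*a⁻¹*b⁻¹^2*s*w2 + (-12)*a*h*a⁻¹*b⁻¹^2*s*w1 + (1)*a*h*a⁻¹*h⁻¹*s*θx3 + (1/2)*a*h*a⁻¹*h⁻¹*s*θx2 + (1/2)*a*h*a⁻¹*h⁻¹*s*θx1 + (4)*a*h*a⁻¹*h⁻¹*b⁻¹*s*w3 + (-8)*a*h*a⁻¹*h⁻¹*b⁻¹*s*w2 + (4)*a*h*a⁻¹*h⁻¹*b⁻¹*s*w1 + (-2)*a*h^2*b⁻¹^2*θy2 + (-1)*a*h^2*b⁻¹^2*θy1 + (-3)*a*h^2*b⁻¹^3*s*θy2 + (-3)*a*h^2*b⁻¹^3*s*θy1 + (-3/2)*a*h^2*h⁻¹*b⁻¹^2*s*θy3 + (3/2)*a*h^2*h⁻¹*b⁻¹^2*s*θy1 + (-2)*a*h^2*h⁻¹*b⁻¹^3*s^2*θy3 + (-1)*a*h^2*h⁻¹*b⁻¹^3*s^2*θy2 + (-1)*a*h^2*h⁻¹*b⁻¹^3*s^2*θy1 + (1)*a*h^2*h⁻¹^2*b⁻¹^2*s^2*θy3 + (3/2)*a*h^2*h⁻¹^2*b⁻¹^2*s^2*θy2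 + (-1/2)*a*h^2*h⁻¹^2*b⁻¹^2*s^2*θy1 + (-3)*a*h^2*a⁻¹*b⁻¹^2*w2 + (3)*a*h^2*a⁻¹*b⁻¹^2*w1 + (-6)*a*h^2*a⁻¹*b⁻¹^3*s*w2 + (6)*a*h^2*a⁻¹*b⁻¹^3*s*w1 + (-2)*a*h^2*a⁻¹*h⁻¹*b⁻¹*s*θx3 + (-1)*a*h^2*a⁻¹*h⁻¹*b⁻¹*s*θx2 + (-1)*a*h^2*a⁻¹*h⁻¹*b⁻¹*s*θx1 + (-2)*a*h^2*a⁻¹*h⁻¹*b⁻¹^2*s*w3 + (4)*a*h^2*a⁻¹*h⁻¹*b⁻¹^2*s*w2 + (-2)*a*h^2*a⁻¹*h⁻¹*b⁻¹^2*s*w1 + (1)*a*h^3*b⁻¹^3*θy2 + (1)*a*h^3*b⁻¹^3*θy1 + (1)*a*h^3*h⁻¹*b⁻¹^3*s*θy3 + (1/2)*a*h^3*h⁻¹*b⁻¹^3*s*θy2 + (1/2)*a*h^3*h⁻¹*b⁻¹^3*s*θy1 + (2)*a*h^3*a⁻¹*b⁻¹^3*w2 + (-2)*a*h^3*a⁻¹*b⁻¹^3*w1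 + (1)*a*h^3*a⁻¹*h⁻¹*b⁻¹^2*s*θx3 + (1/2)*a*h^3*a⁻¹*h⁻¹*b⁻¹^2*s*θx2 + (1/2)*a*h^3*a⁻¹*h⁻¹*b⁻¹^2*s*θx1 + (1)*a^2*a⁻¹*θy1 + (-3)*a^2*a⁻¹*b⁻¹*s*θy2 + (-3)*a^2*a⁻¹*b⁻¹*s*θy1 + (-1/2)*a^2*a⁻¹*h⁻¹*s*θy3 + (3/2)*a^2*a⁻¹*h⁻¹*s*θy2 + (1)*a^2*a⁻¹*h⁻¹*s*θy1 + (-2)*a^2*a⁻¹^2*w2 + (2)*a^2*a⁻¹^2*w1 + (1)*a^2*h*a⁻¹*b⁻¹*θy2 + (-1)*a^2*h*a⁻¹*b⁻¹*θy1 + (6)*a^2*h*a⁻¹*b⁻¹^2*s*θy2 + (6)*a^2*h*a⁻¹*b⁻¹^2*s*θy1 + (2)*a^2*h*a⁻¹*h⁻¹*b⁻¹*s*θy3 + (-5/2)*a^2*h*a⁻¹*h⁻¹*b⁻¹*s*θy2 + (-3/2)*a^2*h*a⁻¹*h⁻¹*b⁻¹*s*θy1 + (6)*a^2*h*a⁻¹^2*b⁻¹*w2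 + (-6)*a^2*h*a⁻¹^2*b⁻¹*w1 + (-2)*a^2*h^2*a⁻¹*b⁻¹^2*θy2 + (-1)*a^2*h^2*a⁻¹*b⁻¹^2*θy1 + (-3)*a^2*h^2*a⁻¹*b⁻¹^3*s*θy2 + (-3)*a^2*h^2*a⁻¹*b⁻¹^3*s*θy1 + (-5/2)*a^2*h^2*a⁻¹*h⁻¹*b⁻¹^2*s*θy3 + (1/2)*a^2*h^2*a⁻¹*h⁻¹*b⁻¹^2*s*θy2 + (-6)*a^2*h^2*a⁻¹^2*b⁻¹^2*w2 + (6)*a^2*h^2*a⁻¹^2*b⁻¹^2*w1 + (1)*a^2*h^3*a⁻¹*b⁻¹^3*θy2 + (1)*a^2*h^3*a⁻¹*b⁻¹^3*θy1 + (1)*a^2*h^3*a⁻¹*h⁻¹*b⁻¹^3*s*θy3 + (1/2)*a^2*h^3*a⁻¹*h⁻¹*b⁻¹^3*s*θy2 + (1/2)*a^2*h^3*a⁻¹*h⁻¹*b⁻¹^3*s*θy1 + (2)*a^2*h^3*a⁻¹^2*b⁻¹^3*w2 + (-2)*a^2*h^3*a⁻¹^2*b⁻¹^3*w1 + (-1)*a^3*a⁻¹^2*θy2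 + (-1)*a^3*a⁻¹^2*θy1 + (3)*a^3*h*a⁻¹^2*b⁻¹*θy2 + (3)*a^3*h*a⁻¹^2*b⁻¹*θy1 + (-3)*a^3*h^2*a⁻¹^2*b⁻¹^2*θy2 + (-3)*a^3*h^2*a⁻¹^2*b⁻¹^2*θy1 + (1)*a^3*h^3*a⁻¹^2*b⁻¹^3*θy2 + (1)*a^3*h^3*a⁻¹^2*b⁻¹^3*θy1) * hA + ((1)*s*θx2 + (2)*b⁻¹*s*w3 + (-4)*b⁻¹*s*w2 + (2)*b⁻¹*s*w1 + (2)*b⁻¹*s^2*θx3 + (3)*b⁻¹*s^2*θx2 + (-1)*b⁻¹*s^2*θx1 + (4)*b⁻¹^2*s^2*w3 + (-8)*b⁻¹^2*s^2*w2 + (4)*b⁻¹^2*s^2*w1 + (1)*b⁻¹^2*s^3*θx3 + (1/2)*b⁻¹^2*s^3*θx2 + (1/2)*b⁻¹^2*s^3*θx1 + (-1)*h⁻¹*s^2*θx3 + (-2)*h⁻¹*s^2*θx2 + (-2)*h⁻¹*b⁻¹*s^2*w3 + (4)*h⁻¹*b⁻¹*s^2*w2 + (-2)*h⁻¹*b⁻¹*s^2*w1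 + (-1)*h⁻¹*b⁻¹*s^3*θx3 + (-3/2)*h⁻¹*b⁻¹*s^3*θx2 + (1/2)*h⁻¹*b⁻¹*s^3*θx1 + (1)*h⁻¹^2*s^3*θx3 + (1)*h⁻¹^2*s^3*θx2 + (-1)*h*b⁻¹*s*θx3 + (-3/2)*h*b⁻¹*s*θx2 + (1/2)*h*b⁻¹*s*θx1 + (-2)*h*b⁻¹^2*s*w3 + (4)*h*b⁻¹^2*s*w2 + (-2)*h*b⁻¹^2*s*w1 + (-2)*h*b⁻¹^2*s^2*θx3 + (-1)*h*b⁻¹^2*s^2*θx2 + (-1)*h*b⁻¹^2*s^2*θx1 + (1)*h*h⁻¹*b⁻¹*s^2*θx3 + (3/2)*h*h⁻¹*b⁻¹*s^2*θx2 + (-1/2)*h*h⁻¹*b⁻¹*s^2*θx1 + (1)*h^2*b⁻¹^2*s*θx3 + (1/2)*h^2*b⁻¹^2*s*θx2 + (1/2)*h^2*b⁻¹^2*s*θx1 + (1/2)*a*b⁻¹*s*θy3 + (-1/2)*a*b⁻¹*s*θy2 + (-1)*a*b⁻¹*s*θy1 + (3)*a*b⁻¹^2*s^2*θy3 + (-3)*a*b⁻¹^2*s^2*θy1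 + (1)*a*b⁻¹^3*s^3*θy3 + (1/2)*a*b⁻¹^3*s^3*θy2 + (1/2)*a*b⁻¹^3*s^3*θy1 + (-1/2)*a*h⁻¹*b⁻¹*s^2*θy3 + (-3/2)*a*h⁻¹*b⁻¹*s^2*θy2 + (1)*a*h⁻¹*b⁻¹*s^2*θy1 + (-1)*a*h⁻¹*b⁻¹^2*s^3*θy3 + (-3/2)*a*h⁻¹*b⁻¹^2*s^3*θy2 + (1/2)*a*h⁻¹*b⁻¹^2*s^3*θy1 + (1)*a*h⁻¹^2*b⁻¹*s^3*θy3 + (1)*a*h⁻¹^2*b⁻¹*s^3*θy2 + (-3/2)*a*h*b⁻¹^2*s*θy3 + (3/2)*a*h*b⁻¹^2*s*θy1 + (-2)*a*h*b⁻¹^3*s^2*θy3 + (-1)*a*h*b⁻¹^3*s^2*θy2 + (-1)*a*h*b⁻¹^3*s^2*θy1 + (1)*a*h*h⁻¹*b⁻¹^2*s^2*θy3 + (3/2)*a*h*h⁻¹*b⁻¹^2*s^2*θy2 + (-1/2)*a*h*h⁻¹*b⁻¹^2*s^2*θy1 + (1)*a*h^2*b⁻¹^3*s*θy3 + (1/2)*a*h^2*b⁻¹^3*s*θy2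 + (1/2)*a*h^2*b⁻¹^3*s*θy1) * hH + (0:ℝ) * hB
    rw [e, cubic_deriv]
    linear_combination (norm := ring1) (0:ℝ) * hA + ((1)*θx3 + (-1)*θx2 + (-2)*b⁻¹*w3 + (4)*b⁻¹*w2 + (-2)*b⁻¹*w1 + (-3)*h*b⁻¹*θx3 + (-9/2)*h*b⁻¹*θx2 + (3/2)*h*b⁻¹*θx1 + (-6)*h*b⁻¹^2*w3 + (12)*h*b⁻¹^2*w2 + (-6)*h*b⁻¹^2*w1 + (3)*h*h⁻¹*θx3 + (3)*h*h⁻¹*θx2 + (6)*h*h⁻¹*b⁻¹*w3 + (-12)*h*h⁻¹*b⁻¹*w2 + (6)*h*h⁻¹*b⁻¹*w1 + (-6)*h*h⁻¹^2*w3 + (6)*h*h⁻¹^2*w2 + (-1/2)*a*b⁻¹*θy3 + (3/2)*a*b⁻¹*θy2 + (1)*a*b⁻¹*θy1 + (-9/2)*a*h*b⁻¹^2*θy3 + (9/2)*a*h*b⁻¹^2*θy1 + (3/2)*a*h*h⁻¹*b⁻¹*θy3 + (3/2)*a*h*h⁻¹*b⁻¹*θy2 + (-3)*a*h*h⁻¹*b⁻¹*θy1)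 * hH + (0:ℝ) * hB
  · show deriv (fun s => w s (0:ℝ)) (0:ℝ) = _
    have e : (fun s => w s (0:ℝ)) = (fun s : ℝ => ((1)*w1) + ((-1)*θy1) * s + ((1)*a⁻¹*θy2 + (2)*a⁻¹*θy1 + (3)*a⁻¹^2*w2 + (-3)*a⁻¹^2*w1) * s ^ 2 + ((-1)*a⁻¹^2*θy2 + (-1)*a⁻¹^2*θy1 + (-2)*a⁻¹^3*w2 + (2)*a⁻¹^3*w1) * s ^ 3) := by
      funext s; simp only [w, N1, N2, N3, Nx1, Nx2, Nx3, Ny1, Ny2, Ny3, L1, L2, L3]; linear_combination (norm := ring1) ((-1)*s*θy1 + (1)*a⁻¹*s^2*θy2 + (2)*a⁻¹*s^2*θy1 + (-1)*a⁻¹^2*s^3*θy2 + (-1)*a⁻¹^2*s^3*θy1) * hA + (0:ℝ) * hH + (0:ℝ) * hB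
    rw [e, cubic_deriv]
    linear_combination (norm := ring1) (0:ℝ) * hA + (0:ℝ) * hH + (0:ℝ) * hB
  · show deriv (fun s => w s (0:ℝ)) a = _
    have e : (fun s => w s (0:ℝ)) = (fun s : ℝ => ((1)*w1) + ((-1)*θy1) * s + ((1)*a⁻¹*θy2 + (2)*a⁻¹*θy1 + (3)*a⁻¹^2*w2 + (-3)*a⁻¹^2*w1) * s ^ 2 + ((-1)*a⁻¹^2*θy2 + (-1)*a⁻¹^2*θy1 + (-2)*a⁻¹^3*w2 + (2)*a⁻¹^3*w1) * s ^ 3) := by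
      funext s; simp only [w, N1, N2, N3, Nx1, Nx2, Nx3, Ny1, Ny2, Ny3, L1, L2, L3]; linear_combination (norm := ring1) ((-1)*s*θy1 + (1)*a⁻¹*s^2*θy2 + (2)*a⁻¹*s^2*θy1 + (-1)*a⁻¹^2*s^3*θy2 + (-1)*a⁻¹^2*s^3*θy1) * hA + (0:ℝ) * hH + (0:ℝ) * hB
    rw [e, cubic_deriv]
    linear_combination (norm := ring1) ((-1)*θy2 + (1)*θy1 + (-3)*a*a⁻¹*θy2 + (-3)*a*a⁻¹*θy1 + (-6)*a*a⁻¹^2*w2 + (6)*a*a⁻¹^2*w1) * hA + (0:ℝ) * hH + (0:ℝ) * hB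
  · show deriv (fun s => w s h) (a * (1 - h / b)) = _
    have e : (fun s => w s h) = (fun s : ℝ => ((-1)*w3 + (3)*w2 + (-1)*w1 + (1)*h*θx3 + (1/2)*h*θx2 + (1/2)*h*θx1 + (4)*h*b⁻¹*w3 + (-8)*h*b⁻¹*w2 + (4)*h*b⁻¹*w1 + (-2)*h^2*b⁻¹*θx3 + (-1)*h^2*b⁻¹*θx2 + (-1)*h^2*b⁻¹*θx1 + (-2)*h^2*b⁻¹^2*w3 + (7)*h^2*b⁻¹^2*w2 + (-5)*h^2*b⁻¹^2*w1 + (1)*h^3*b⁻¹^2*θx3 + (1/2)*h^3*b⁻¹^2*θx2 + (1/2)*h^3*b⁻¹^2*θx1 + (-2)*h^3*b⁻¹^3*w2 + (2)*h^3*b⁻¹^3*w1 + (1/2)*a*θy3 + (1/2)*a*θy2 + (1)*a*θy1 + (1)*a*h*b⁻¹*θy3 + (-3/2)*a*h*b⁻¹*θy2 + (-5/2)*a*h*b⁻¹*θy1 + (-5/2)*a*h^2*b⁻¹^2*θy3 + (3/2)*a*h^2*b⁻¹^2*θy2 + (2)*a*h^2*b⁻¹^2*θy1 + (1)*a*h^3*b⁻¹^3*θy3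 + (-1/2)*a*h^3*b⁻¹^3*θy2 + (-1/2)*a*h^3*b⁻¹^3*θy1) + ((-2)*θy2 + (-3)*θy1 + (4)*a⁻¹*w3 + (-8)*a⁻¹*w2 + (4)*a⁻¹*w1 + (-3)*h*b⁻¹*θy3 + (4)*h*b⁻¹*θy2 + (5)*h*b⁻¹*θy1 + (-2)*h*a⁻¹*θx3 + (-1)*h*a⁻¹*θx2 + (-1)*h*a⁻¹*θx1 + (-4)*h*a⁻¹*b⁻¹*w3 + (14)*h*a⁻¹*b⁻¹*w2 + (-10)*h*a⁻¹*b⁻¹*w1 + (2)*h^2*b⁻¹^2*θy3 + (-2)*h^2*b⁻¹^2*θy2 + (-2)*h^2*b⁻¹^2*θy1 + (2)*h^2*a⁻¹*b⁻¹*θx3 + (1)*h^2*a⁻¹*b⁻¹*θx2 + (1)*h^2*a⁻¹*b⁻¹*θx1 + (-6)*h^2*a⁻¹*b⁻¹^2*w2 + (6)*h^2*a⁻¹*b⁻¹^2*w1) * s + ((-1/2)*a⁻¹*θy3 + (5/2)*a⁻¹*θy2 + (3)*a⁻¹*θy1 + (-2)*a⁻¹^2*w3 + (7)*a⁻¹^2*w2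 + (-5)*a⁻¹^2*w1 + (1)*h*a⁻¹*b⁻¹*θy3 + (-5/2)*h*a⁻¹*b⁻¹*θy2 + (-5/2)*h*a⁻¹*b⁻¹*θy1 + (1)*h*a⁻¹^2*θx3 + (1/2)*h*a⁻¹^2*θx2 + (1/2)*h*a⁻¹^2*θx1 + (-6)*h*a⁻¹^2*b⁻¹*w2 + (6)*h*a⁻¹^2*b⁻¹*w1) * s ^ 2 + ((-1)*a⁻¹^2*θy2 + (-1)*a⁻¹^2*θy1 + (-2)*a⁻¹^3*w2 + (2)*a⁻¹^3*w1) * s ^ 3) := by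
      funext s; simp only [w, N1, N2, N3, Nx1, Nx2, Nx3, Ny1, Ny2, Ny3, L1, L2, L3]; linear_combination (norm := ring1) ((-1)*s*θy1 + (1)*a⁻¹*s^2*θy2 + (2)*a⁻¹*s^2*θy1 + (-1)*a⁻¹^2*s^3*θy2 + (-1)*a⁻¹^2*s^3*θy1 + (2)*h*b⁻¹*s*θy2 + (4)*h*b⁻¹*s*θy1 + (1/2)*h*h⁻¹*s*θy3 + (-3/2)*h*h⁻¹*s*θy2 + (-1)*h*h⁻¹*s*θy1 + (-3)*h*a⁻¹*b⁻¹*s^2*θy2 + (-3)*h*a⁻¹*b⁻¹*s^2*θy1 + (-1/2)*h*a⁻¹*h⁻¹*s^2*θy3 + (3/2)*h*a⁻¹*h⁻¹*s^2*θy2 + (1)*h*a⁻¹*h⁻¹*s^2*θy1 + (-3)*h^2*b⁻¹^2*s*θy2 + (-3)*h^2*b⁻¹^2*s*θy1 + (-2)*h^2*h⁻¹*b⁻¹*s*θy3 + (7/2)*h^2*h⁻¹*b⁻¹*s*θy2 + (1/2)*h^2*h⁻¹*b⁻¹*s*θy1 + (-1/2)*h^2*h⁻¹^2*s*θy3 +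 (-1/2)*h^2*h⁻¹^2*s*θy2 + (-1)*h^2*h⁻¹^2*s*θy1 + (1)*h^2*a⁻¹*h⁻¹*b⁻¹*s^2*θy3 + (1/2)*h^2*a⁻¹*h⁻¹*b⁻¹*s^2*θy2 + (1/2)*h^2*a⁻¹*h⁻¹*b⁻¹*s^2*θy1 + (2)*h^3*h⁻¹*b⁻¹^2*s*θy3 + (1)*h^3*h⁻¹*b⁻¹^2*s*θy2 + (1)*h^3*h⁻¹*b⁻¹^2*s*θy1 + (-1)*h^3*h⁻¹^2*b⁻¹*s*θy3 + (-3/2)*h^3*h⁻¹^2*b⁻¹*s*θy2 + (1/2)*h^3*h⁻¹^2*b⁻¹*s*θy1) * hA + ((-1)*w3 + (3)*w2 + (-2)*w1 + (-2)*s*θy2 + (-2)*s*θy1 + (4)*a⁻¹*s*w3 + (-8)*a⁻¹*s*w2 + (4)*a⁻¹*s*w1 + (-1/2)*a⁻¹*s^2*θy3 + (3/2)*a⁻¹*s^2*θy2 + (1)*a⁻¹*s^2*θy1 + (-2)*a⁻¹^2*s^2*w3 + (4)*a⁻¹^2*s^2*w2 + (-2)*a⁻¹^2*s^2*w1 + (1)*h*θx3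 + (1/2)*h*θx2 + (1/2)*h*θx1 + (4)*h*b⁻¹*w3 + (-8)*h*b⁻¹*w2 + (4)*h*b⁻¹*w1 + (-3)*h*b⁻¹*s*θy3 + (2)*h*b⁻¹*s*θy2 + (1)*h*b⁻¹*s*θy1 + (-1)*h*h⁻¹*w3 + (3)*h*h⁻¹*w2 + (-2)*h*h⁻¹*w1 + (-1/2)*h*h⁻¹*s*θy3 + (-1/2)*h*h⁻¹*s*θy2 + (-1)*h*h⁻¹*s*θy1 + (-2)*h*a⁻¹*s*θx3 + (-1)*h*a⁻¹*s*θx2 + (-1)*h*a⁻¹*s*θx1 + (-4)*h*a⁻¹*b⁻¹*s*w3 + (8)*h*a⁻¹*b⁻¹*s*w2 + (-4)*h*a⁻¹*b⁻¹*s*w1 + (1)*h*a⁻¹*b⁻¹*s^2*θy3 + (1/2)*h*a⁻¹*b⁻¹*s^2*θy2 + (1/2)*h*a⁻¹*b⁻¹*s^2*θy1 + (2)*h*a⁻¹*h⁻¹*s*w3 + (-4)*h*a⁻¹*h⁻¹*s*w2 + (2)*h*a⁻¹*h⁻¹*s*w1 + (1)*h*a⁻¹^2*s^2*θx3 + (1/2)*h*a⁻¹^2*s^2*θx2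 + (1/2)*h*a⁻¹^2*s^2*θx1 + (-2)*h^2*b⁻¹*θx3 + (-1)*h^2*b⁻¹*θx2 + (-1)*h^2*b⁻¹*θx1 + (-2)*h^2*b⁻¹^2*w3 + (4)*h^2*b⁻¹^2*w2 + (-2)*h^2*b⁻¹^2*w1 + (2)*h^2*b⁻¹^2*s*θy3 + (1)*h^2*b⁻¹^2*s*θy2 + (1)*h^2*b⁻¹^2*s*θy1 + (1)*h^2*h⁻¹*θx3 + (1/2)*h^2*h⁻¹*θx2 + (-1/2)*h^2*h⁻¹*θx1 + (2)*h^2*h⁻¹*b⁻¹*w3 + (-4)*h^2*h⁻¹*b⁻¹*w2 + (2)*h^2*h⁻¹*b⁻¹*w1 + (-1)*h^2*h⁻¹*b⁻¹*s*θy3 + (-3/2)*h^2*h⁻¹*b⁻¹*s*θy2 + (1/2)*h^2*h⁻¹*b⁻¹*s*θy1 + (-2)*h^2*h⁻¹^2*w3 + (2)*h^2*h⁻¹^2*w2 + (2)*h^2*a⁻¹*b⁻¹*s*θx3 + (1)*h^2*a⁻¹*b⁻¹*s*θx2 + (1)*h^2*a⁻¹*b⁻¹*s*θx1 + (-1)*h^2*a⁻¹*h⁻¹*s*θx3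 + (-3/2)*h^2*a⁻¹*h⁻¹*s*θx2 + (1/2)*h^2*a⁻¹*h⁻¹*s*θx1 + (1)*h^3*b⁻¹^2*θx3 + (1/2)*h^3*b⁻¹^2*θx2 + (1/2)*h^3*b⁻¹^2*θx1 + (-1)*h^3*h⁻¹*b⁻¹*θx3 + (-3/2)*h^3*h⁻¹*b⁻¹*θx2 + (1/2)*h^3*h⁻¹*b⁻¹*θx1 + (1)*h^3*h⁻¹^2*θx3 + (1)*h^3*h⁻¹^2*θx2 + (1/2)*a*θy3 + (1/2)*a*θy2 + (1)*a*θy1 + (1)*a*h*b⁻¹*θy3 + (-3/2)*a*h*b⁻¹*θy2 + (-3/2)*a*h*b⁻¹*θy1 + (1/2)*a*h*h⁻¹*θy3 + (1/2)*a*h*h⁻¹*θy2 + (1)*a*h*h⁻¹*θy1 + (-5/2)*a*h^2*b⁻¹^2*θy3 + (1/2)*a*h^2*b⁻¹^2*θy2 + (1/2)*a*h^2*h⁻¹*b⁻¹*θy3 + (-3/2)*a*h^2*h⁻¹*b⁻¹*θy1 + (1)*a*h^3*b⁻¹^3*θy3 + (1/2)*a*h^3*b⁻¹^3*θy2 + (1/2)*a*h^3*b⁻¹^3*θy1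 + (-1)*a*h^3*h⁻¹*b⁻¹^2*θy3 + (-3/2)*a*h^3*h⁻¹*b⁻¹^2*θy2 + (1/2)*a*h^3*h⁻¹*b⁻¹^2*θy1 + (1)*a*h^3*h⁻¹^2*b⁻¹*θy3 + (1)*a*h^3*h⁻¹^2*b⁻¹*θy2) * hH + (0:ℝ) * hB
    rw [e, cubic_deriv]
    linear_combination (norm := ring1) ((-1)*θy3 + (2)*θy2 + (3)*θy1 + (-4)*a⁻¹*w3 + (8)*a⁻¹*w2 + (-4)*a⁻¹*w1 + (3)*h*b⁻¹*θy3 + (-4)*h*b⁻¹*θy2 + (-5)*h*b⁻¹*θy1 + (2)*h*a⁻¹*θx3 + (1)*h*a⁻¹*θx2 + (1)*h*a⁻¹*θx1 + (4)*h*a⁻¹*b⁻¹*w3 + (-14)*h*a⁻¹*b⁻¹*w2 + (10)*h*a⁻¹*b⁻¹*w1 + (-2)*h^2*b⁻¹^2*θy3 + (2)*h^2*b⁻¹^2*θy2 + (2)*h^2*b⁻¹^2*θy1 + (-2)*h^2*a⁻¹*b⁻¹*θx3 + (-1)*h^2*a⁻¹*b⁻¹*θx2 + (-1)*h^2*a⁻¹*b⁻¹*θx1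 + (6)*h^2*a⁻¹*b⁻¹^2*w2 + (-6)*h^2*a⁻¹*b⁻¹^2*w1 + (-3)*a*a⁻¹*θy2 + (-3)*a*a⁻¹*θy1 + (-6)*a*a⁻¹^2*w2 + (6)*a*a⁻¹^2*w1 + (6)*a*h*a⁻¹*b⁻¹*θy2 + (6)*a*h*a⁻¹*b⁻¹*θy1 + (12)*a*h*a⁻¹^2*b⁻¹*w2 + (-12)*a*h*a⁻¹^2*b⁻¹*w1 + (-3)*a*h^2*a⁻¹*b⁻¹^2*θy2 + (-3)*a*h^2*a⁻¹*b⁻¹^2*θy1 + (-6)*a*h^2*a⁻¹^2*b⁻¹^2*w2 + (6)*a*h^2*a⁻¹^2*b⁻¹^2*w1) * hA + (0:ℝ) * hH + (0:ℝ) * hB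
end
end

section
/- The nine shape functions N1, N2, N3, Nx1, Nx2, Nx3, Ny1, Ny2, Ny3, regarded as elements of the real vector space of functions ℝ² → ℝ, are linearly independent over ℝ. -/
noncomputable section

/-- The nine shape functions are linearly independent in the real vector space
of functions `ℝ² → ℝ`. -/
theorem shape_functions_linearIndependent (a h b : ℝ)
    (ha : 0 < a) (hh : 0 < h) (hb : h ≤ b) :
    LinearIndependent ℝ
      (![fun p : ℝ × ℝ => N1 a h b p.1 p.2,
         fun p : ℝ × ℝ => N2 a h b p.1 p.2,
         fun p : ℝ × ℝ => N3 a h b p.1 p.2,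
         fun p : ℝ × ℝ => Nx1 a h b p.1 p.2,
         fun p : ℝ × ℝ => Nx2 a h b p.1 p.2,
         fun p : ℝ × ℝ => Nx3 a h b p.1 p.2,
         fun p : ℝ × ℝ => Ny1 a h b p.1 p.2,
         fun p : ℝ × ℝ => Ny2 a h b p.1 p.2,
         fun p : ℝ × ℝ => Ny3 a h b p.1 p.2] :
        Fin 9 → (ℝ × ℝ → ℝ)) := by
  have ha' : a ≠ 0 := ne_of_gt ha
  have hh' : h ≠ 0 := ne_of_gt hh
  have hb' : b ≠ 0 := ne_of_gt (lt_of_lt_of_le hh hb)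
  rw [Fintype.linearIndependent_iff]
  intro g hg
  have e1 : ∀ u v : ℝ, L1 a b (a*(u+(1-h/b)*v)) (h*v) = 1-u-v := by
    intro u v; unfold L1; field_simp; ring
  have e2 : ∀ u v : ℝ, L2 a h b (a*(u+(1-h/b)*v)) (h*v) = u := by
    intro u v; unfold L2; field_simp; ring
  have e3 : ∀ u v : ℝ, L3 h (a*(u+(1-h/b)*v)) (h*v) = v := by
    intro u v; unfold L3; field_simp
  have hE : ∀ u v : ℝ,
      g 0 * N1 a h b (a*(u+(1-h/b)*v)) (h*v) + g 1 * N2 a h b (a*(u+(1-h/b)*v)) (h*v)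
        + g 2 * N3 a h b (a*(u+(1-h/b)*v)) (h*v) + g 3 * Nx1 a h b (a*(u+(1-h/b)*v)) (h*v)
        + g 4 * Nx2 a h b (a*(u+(1-h/b)*v)) (h*v) + g 5 * Nx3 a h b (a*(u+(1-h/b)*v)) (h*v)
        + g 6 * Ny1 a h b (a*(u+(1-h/b)*v)) (h*v) + g 7 * Ny2 a h b (a*(u+(1-h/b)*v)) (h*v)
        + g 8 * Ny3 a h b (a*(u+(1-h/b)*v)) (h*v) = 0 := by
    intro u v
    have hx := congrFun hg (a*(u+(1-h/b)*v), h*v)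
    simp [Fin.sum_univ_succ, show (Fin.succ ((2 : Fin 8)) : Fin 9) = 3 from rfl, show (Fin.succ (Fin.succ ((2 : Fin 7))) : Fin 9) = 4 from rfl, show (Fin.succ (Fin.succ (Fin.succ ((2 : Fin 6)))) : Fin 9) = 5 from rfl, show (Fin.succ (Fin.succ (Fin.succ (Fin.succ ((2 : Fin 5))))) : Fin 9) = 6 from rfl, show (Fin.succ (Fin.succ (Fin.succ (Fin.succ (Fin.succ ((2 : Fin 4)))))) : Fin 9) = 7 from rfl, show (Fin.succ (Fin.succ (Fin.succ (Fin.succ (Fin.succ (Fin.succ ((2 : Fin 3))))))) : Fin 9) = 8 from rfl] at hx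
    linear_combination hx
  have key : ∀ u v : ℝ,
      g 0 * ((1-u-v) + (1-u-v)^2*u + (1-u-v)^2*v - (1-u-v)*u^2 - (1-u-v)*v^2) + g 1 * (u + u^2*v + u^2*(1-u-v) - u*v^2 - u*(1-u-v)^2) + g 2 * (v + v^2*(1-u-v) + v^2*u - v*(1-u-v)^2 - v*u^2) + g 3 * (h * ((1-u-v)^2*v + (1/2)*(1-u-v)*u*v)) + g 4 * (h * (u^2*v + (1/2)*(1-u-v)*u*v)) + g 5 * (-h * (v^2*(1-u-v) + u*v^2 + (1-u-v)*u*v)) + g 6 * (-a * ((1-u-v)^2*u + (1/2)*(1-u-v)*u*v) - a*(1-h/b) * ((1-u-v)^2*v + (1/2)*(1-u-v)*u*v)) + g 7 * ((a*h/b) * (u^2*v + (1/2)*(1-u-v)*u*v) + a * ((1-u-v)*u^2 + (1/2)*(1-u-v)*u*v)) + g 8 * (a*(1-h/b) * (v^2*(1-u-v) + (1/2)*(1-u-v)*u*v) - (a*h/b) * (u*v^2 + (1/2)*(1-u-v)*u*v)) = 0 := by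
    intro u v
    have hx := hE u v
    simp only [N1, N2, N3, Nx1, Nx2, Nx3, Ny1, Ny2, Ny3, e1, e2, e3] at hx
    linear_combination hx
  have h0 : g 0 = 0 := by linear_combination key 0 0
  have h1 : g 1 = 0 := by linear_combination key 1 0
  have h2 : g 2 = 0 := by linear_combination key 0 1
  have h6m : g 6 * a = 0 := by
    linear_combination (5/6 : ℝ) * key 1 1 + (13/18 : ℝ) * key (-1) 1 + (2/9 : ℝ) * key 1 (-1)
      + (-1/18 : ℝ) * key 2 1 + (-1/18 : ℝ) * key 1 2 + (-1/6 : ℝ) * key (-1) 2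
      + (2/3 : ℝ) * h0 + (-4/3 : ℝ) * h1 + (-5/6 : ℝ) * h2
  have h6 : g 6 = 0 := (mul_eq_zero.mp h6m).resolve_right ha'
  have h7m : g 7 * a = 0 := by
    linear_combination (-1/3 : ℝ) * key 1 1 + (-5/9 : ℝ) * key (-1) 1 + (-2/9 : ℝ) * key 1 (-1)
      + (-1/9 : ℝ) * key 2 1 + (1/18 : ℝ) * key 1 2 + (1/6 : ℝ) * key (-1) 2
      + (4/3 : ℝ) * h0 + (-2/3 : ℝ) * h1 + (1/3 : ℝ) * h2
  have h7 : g 7 = 0 := (mul_eq_zero.mp h7m).resolve_right ha'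
  have h3m : g 3 * h = 0 := by
    linear_combination (-7/6 : ℝ) * key 1 1 + (1/18 : ℝ) * key (-1) 1 + (-4/9 : ℝ) * key 1 (-1)
      + (1/9 : ℝ) * key 2 1 + (1/9 : ℝ) * key 1 2 + (-1/6 : ℝ) * key (-1) 2
      + (-4/3 : ℝ) * h0 + (7/6 : ℝ) * h1 + (5/3 : ℝ) * h2 + (a*(1-h/b)) * h6
  have h3 : g 3 = 0 := (mul_eq_zero.mp h3m).resolve_right hh'
  have h4m : g 4 * h = 0 := by
    linear_combination (2/3 : ℝ) * key 1 1 + (-5/9 : ℝ) * key (-1) 1 + (-5/9 : ℝ) * key 1 (-1)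
      + (-1/9 : ℝ) * key 2 1 + (-1/9 : ℝ) * key 1 2 + (1/6 : ℝ) * key (-1) 2
      + (4/3 : ℝ) * h0 + (-7/6 : ℝ) * h1 + (1/3 : ℝ) * h2 + (-(a*h/b)) * h7
  have h4 : g 4 = 0 := (mul_eq_zero.mp h4m).resolve_right hh'
  have h8m : g 8 * a = 0 := by
    linear_combination (-1 : ℝ) * key 1 1 + (1/3 : ℝ) * key (-1) 1
      + (1/6 : ℝ) * key 2 1 + (1/2 : ℝ) * h2
  have h8 : g 8 = 0 := (mul_eq_zero.mp h8m).resolve_right ha'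
  have h5m : g 5 * h = 0 := by
    linear_combination (-1/3 : ℝ) * key 1 1 + (5/18 : ℝ) * key (-1) 1 + (5/18 : ℝ) * key 1 (-1)
      + (1/18 : ℝ) * key 2 1 + (1/18 : ℝ) * key 1 2 + (1/6 : ℝ) * key (-1) 2
      + (-2/3 : ℝ) * h0 + (-2/3 : ℝ) * h1 + (5/6 : ℝ) * h2 + (-(a*h/b)) * h8
  have h5 : g 5 = 0 := (mul_eq_zero.mp h5m).resolve_right hh'
  intro i
  fin_cases i <;> assumption
end
end

section
/- The basic full node shape function φ is well defined (the six piecewise polynomial expressions agree wherever two of the domains D1,…,D6 intersect, and each vanishes on the outer boundary of the hexagon D1 ∪ … ∪ D6) and φ : ℝ² → ℝ is continuous. -/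
noncomputable section

/-- Linear functional `g1(x,y) = x/a + y/b`. -/
def g1 (a b : ℝ) (p : ℝ × ℝ) : ℝ := p.1 / a + p.2 / b

/-- Linear functional `g2(x,y) = x/a - (1/h - 1/b)·y`. -/
def g2 (a h b : ℝ) (p : ℝ × ℝ) : ℝ := p.1 / a - (1 / h - 1 / b) * p.2

/-- Linear functional `g3(x,y) = y/h`. -/
def g3 (h : ℝ) (p : ℝ × ℝ) : ℝ := p.2 / h

/-- The cubic polynomial `F(u,v,w) = u + u²·(v + w) - u·(v² + w²)`. -/
def Fcube (u v w : ℝ) : ℝ := u + u ^ 2 * (v + w) - u * (v ^ 2 + w ^ 2)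

/-- The six subdomains `D1, …, D6` of the hexagon around the origin. -/
def Dom (a h b : ℝ) : Fin 6 → Set (ℝ × ℝ)
  | 0 => {p | 0 ≤ g2 a h b p ∧ 0 ≤ g3 h p ∧ g1 a b p ≤ 1}
  | 1 => {p | 0 ≤ g1 a b p ∧ g2 a h b p ≤ 0 ∧ g3 h p ≤ 1}
  | 2 => {p | g1 a b p ≤ 0 ∧ 0 ≤ g3 h p ∧ -1 ≤ g2 a h b p}
  | 3 => {p | g2 a h b p ≤ 0 ∧ g3 h p ≤ 0 ∧ -1 ≤ g1 a b p}
  | 4 => {p | g1 a b p ≤ 0 ∧ 0 ≤ g2 a h b p ∧ -1 ≤ g3 h p}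
  | 5 => {p | 0 ≤ g1 a b p ∧ g3 h p ≤ 0 ∧ g2 a h b p ≤ 1}

/-- The six polynomial pieces of the basic full node shape function. -/
def Fpiece (a h b : ℝ) : Fin 6 → ℝ × ℝ → ℝ
  | 0 => fun p => Fcube (1 - g1 a b p) (g2 a h b p) (g3 h p)
  | 1 => fun p => Fcube (1 - g3 h p) (g1 a b p) (-g2 a h b p)
  | 2 => fun p => Fcube (1 + g2 a h b p) (-g1 a b p) (g3 h p)
  | 3 => fun p => Fcube (1 + g1 a b p) (-g2 a h b p) (-g3 h p)
  | 4 => fun p => Fcube (1 + g3 h p) (-g1 a b p) (g2 a h b p)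
  | 5 => fun p => Fcube (1 - g2 a h b p) (g1 a b p) (-g3 h p)

open Classical in
/-- The basic full node shape function `φ`, defined piecewise on the hexagon
`D1 ∪ … ∪ D6` and zero outside. -/
def phi (a h b : ℝ) (p : ℝ × ℝ) : ℝ :=
  if p ∈ Dom a h b 0 then Fpiece a h b 0 p
  else if p ∈ Dom a h b 1 then Fpiece a h b 1 p
  else if p ∈ Dom a h b 2 then Fpiece a h b 2 p
  else if p ∈ Dom a h b 3 then Fpiece a h b 3 p
  else if p ∈ Dom a h b 4 then Fpiece a h b 4 p
  else if p ∈ Dom a h b 5 then Fpiece a h b 5 p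
  else 0

/-- The basic full node shape function `φ` is well defined (the six pieces agree
on overlaps and vanish on the outer boundary of the hexagon) and continuous. -/
theorem phi_wellDefined_and_continuous (a h b : ℝ)
    (ha : 0 < a) (hh : 0 < h) (hb : h ≤ b) :
    (∀ i j : Fin 6, ∀ p ∈ Dom a h b i ∩ Dom a h b j,
        Fpiece a h b i p = Fpiece a h b j p) ∧
    (∀ i : Fin 6, ∀ p ∈ Dom a h b i ∩ frontier (⋃ j, Dom a h b j),
        Fpiece a h b i p = 0) ∧
    Continuous (phi a h b) := by
  have ha' : a ≠ 0 := ne_of_gt ha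
  have hh' : h ≠ 0 := ne_of_gt hh
  have hb0 : (0:ℝ) < b := lt_of_lt_of_le hh hb
  have hb' : b ≠ 0 := ne_of_gt hb0
  have hg : ∀ p : ℝ × ℝ, g1 a b p = g2 a h b p + g3 h p := by
    intro p; simp only [g1, g2, g3]; field_simp; ring
  refine ⟨?_, ?_, ?_⟩
  · intro i j p hp
    obtain ⟨h1, h2⟩ := hp
    have hgp := hg p
    fin_cases i <;> fin_cases j <;>
      simp only [Dom, Set.mem_setOf_eq, Fpiece] at h1 h2 ⊢ <;>
      obtain ⟨c1, c2, c3⟩ := h1 <;> obtain ⟨d1, d2, d3⟩ := h2 <;>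
      simp only [hgp] at c1 c2 c3 d1 d2 d3 ⊢ <;>
      first
      | (simp only [Fcube]; ring1)
      | (have e1 : g2 a h b p = 0 := by linarith
         rw [e1]; all_goals (simp only [Fcube]; ring1))
      | (have e1 : g3 h p = 0 := by linarith
         rw [e1]; all_goals (simp only [Fcube]; ring1))
      | (have e1 : g2 a h b p = -g3 h p := by linarith
         rw [e1]; all_goals (simp only [Fcube]; ring1))
      | (have e1 : g2 a h b p = 0 := by linarith
         have e2 : g3 h p = 0 := by linarith
         rw [e1, e2]; all_goals (simp only [Fcube]; ring1))
  · have hc1 : Continuous (g1 a b) := by unfold g1; fun_prop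
    have hc2 : Continuous (g2 a h b) := by unfold g2; fun_prop
    have hc3 : Continuous (g3 h) := by unfold g3; fun_prop
    set U : Set (ℝ × ℝ) := {p | -1 < g1 a b p ∧ g1 a b p < 1 ∧ -1 < g2 a h b p ∧
        g2 a h b p < 1 ∧ -1 < g3 h p ∧ g3 h p < 1} with hU
    have hUopen : IsOpen U := by
      have : U = (g1 a b ⁻¹' Set.Ioo (-1) 1) ∩ ((g2 a h b ⁻¹' Set.Ioo (-1) 1) ∩
          (g3 h ⁻¹' Set.Ioo (-1) 1)) := by
        ext q; simp [hU, Set.mem_Ioo]; tauto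
      rw [this]
      exact (isOpen_Ioo.preimage hc1).inter ((isOpen_Ioo.preimage hc2).inter
        (isOpen_Ioo.preimage hc3))
    have hUsub : U ⊆ ⋃ j, Dom a h b j := by
      intro p hp
      obtain ⟨u1, u2, u3, u4, u5, u6⟩ := hp
      have hgp := hg p
      rcases le_total 0 (g2 a h b p) with hs | hs
      · rcases le_total 0 (g3 h p) with ht | ht
        · exact Set.mem_iUnion.mpr ⟨0, ⟨hs, ht, le_of_lt u2⟩⟩
        · rcases le_total 0 (g1 a b p) with hu | hu
          · exact Set.mem_iUnion.mpr ⟨5, ⟨hu, ht, le_of_lt u4⟩⟩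
          · exact Set.mem_iUnion.mpr ⟨4, ⟨hu, hs, le_of_lt u5⟩⟩
      · rcases le_total 0 (g3 h p) with ht | ht
        · rcases le_total 0 (g1 a b p) with hu | hu
          · exact Set.mem_iUnion.mpr ⟨1, ⟨hu, hs, le_of_lt u6⟩⟩
          · exact Set.mem_iUnion.mpr ⟨2, ⟨hu, ht, le_of_lt u3⟩⟩
        · exact Set.mem_iUnion.mpr ⟨3, ⟨hs, ht, le_of_lt u1⟩⟩
    intro i p hp
    obtain ⟨h1, hfr⟩ := hp
    have hpU : p ∉ U := fun hUp => hfr.2 (interior_maximal hUsub hUopen hUp)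
    have hgp := hg p
    fin_cases i <;> simp only [Dom, Set.mem_setOf_eq, Fpiece] at h1 ⊢ <;>
      obtain ⟨c1, c2, c3⟩ := h1
    · have he : (1:ℝ) - g1 a b p = 0 := by
        by_contra hne
        have hlt : g1 a b p < 1 := lt_of_le_of_ne c3 (fun hx => hne (by rw [hx]; ring))
        exact hpU ⟨by linarith, hlt, by linarith, by linarith, by linarith, by linarith⟩
      rw [he]; norm_num [Fcube]
    · have he : (1:ℝ) - g3 h p = 0 := by
        by_contra hne
        have hlt : g3 h p < 1 := lt_of_le_of_ne c3 (fun hx => hne (by rw [hx]; ring))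
        exact hpU ⟨by linarith, by linarith, by linarith, by linarith, by linarith, hlt⟩
      rw [he]; norm_num [Fcube]
    · have he : (1:ℝ) + g2 a h b p = 0 := by
        by_contra hne
        have hlt : -1 < g2 a h b p := lt_of_le_of_ne c3 (fun hx => hne (by rw [← hx]; ring))
        exact hpU ⟨by linarith, by linarith, hlt, by linarith, by linarith, by linarith⟩
      rw [he]; norm_num [Fcube]
    · have he : (1:ℝ) + g1 a b p = 0 := by
        by_contra hne
        have hlt : -1 < g1 a b p := lt_of_le_of_ne c3 (fun hx => hne (by rw [← hx]; ring))
        exact hpU ⟨hlt, by linarith, by linarith, by linarith, by linarith, by linarith⟩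
      rw [he]; norm_num [Fcube]
    · have he : (1:ℝ) + g3 h p = 0 := by
        by_contra hne
        have hlt : -1 < g3 h p := lt_of_le_of_ne c3 (fun hx => hne (by rw [← hx]; ring))
        exact hpU ⟨by linarith, by linarith, by linarith, by linarith, hlt, by linarith⟩
      rw [he]; norm_num [Fcube]
    · have he : (1:ℝ) - g2 a h b p = 0 := by
        by_contra hne
        have hlt : g2 a h b p < 1 := lt_of_le_of_ne c3 (fun hx => hne (by rw [hx]; ring))
        exact hpU ⟨by linarith, by linarith, by linarith, hlt, by linarith, by linarith⟩
      rw [he]; norm_num [Fcube]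
  · have hc1 : Continuous (g1 a b) := by unfold g1; fun_prop
    have hc2 : Continuous (g2 a h b) := by unfold g2; fun_prop
    have hc3 : Continuous (g3 h) := by unfold g3; fun_prop
    have hphi : phi a h b = fun p =>
        max 0 (1 - (|g1 a b p| ⊔ (|g2 a h b p| ⊔ |g3 h p|))) *
          (1 + (|g1 a b p| ⊔ (|g2 a h b p| ⊔ |g3 h p|)) -
            (g1 a b p ^ 2 + g2 a h b p ^ 2 + g3 h p ^ 2)) := by
      funext p
      have hgp := hg p
      unfold phi
      split_ifs with h0 h1 h2 h3 h4 h5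
      · simp only [Dom, Set.mem_setOf_eq] at h0
        obtain ⟨c1, c2, c3⟩ := h0
        have hM : |g1 a b p| ⊔ (|g2 a h b p| ⊔ |g3 h p|) = g1 a b p :=
          le_antisymm (max_le (le_of_eq (abs_of_nonneg (by linarith)))
            (max_le (abs_le.mpr ⟨by linarith, by linarith⟩)
              (abs_le.mpr ⟨by linarith, by linarith⟩)))
            ((le_abs_self _).trans (le_max_left _ _))
        rw [hM, max_eq_right (by linarith : (0:ℝ) ≤ 1 - g1 a b p)]
        simp only [Fpiece, Fcube]
        rw [hgp]
        ring1
      · simp only [Dom, Set.mem_setOf_eq] at h1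
        obtain ⟨c1, c2, c3⟩ := h1
        have hM : |g1 a b p| ⊔ (|g2 a h b p| ⊔ |g3 h p|) = g3 h p :=
          le_antisymm (max_le (abs_le.mpr ⟨by linarith, by linarith⟩)
            (max_le (abs_le.mpr ⟨by linarith, by linarith⟩)
              (le_of_eq (abs_of_nonneg (by linarith)))))
            ((le_abs_self _).trans ((le_max_right _ _).trans (le_max_right _ _)))
        rw [hM, max_eq_right (by linarith : (0:ℝ) ≤ 1 - g3 h p)]
        simp only [Fpiece, Fcube]
        rw [hgp]
        ring1
      · simp only [Dom, Set.mem_setOf_eq] at h2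
        obtain ⟨c1, c2, c3⟩ := h2
        have hM : |g1 a b p| ⊔ (|g2 a h b p| ⊔ |g3 h p|) = -g2 a h b p :=
          le_antisymm (max_le (abs_le.mpr ⟨by linarith, by linarith⟩)
            (max_le (le_of_eq (abs_of_nonpos (by linarith)))
              (abs_le.mpr ⟨by linarith, by linarith⟩)))
            ((neg_le_abs _).trans ((le_max_left _ _).trans (le_max_right _ _)))
        rw [hM, max_eq_right (by linarith : (0:ℝ) ≤ 1 - -g2 a h b p)]
        simp only [Fpiece, Fcube]
        rw [hgp]
        ring1
      · simp only [Dom, Set.mem_setOf_eq] at h3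
        obtain ⟨c1, c2, c3⟩ := h3
        have hM : |g1 a b p| ⊔ (|g2 a h b p| ⊔ |g3 h p|) = -g1 a b p :=
          le_antisymm (max_le (le_of_eq (abs_of_nonpos (by linarith)))
            (max_le (abs_le.mpr ⟨by linarith, by linarith⟩)
              (abs_le.mpr ⟨by linarith, by linarith⟩)))
            ((neg_le_abs _).trans (le_max_left _ _))
        rw [hM, max_eq_right (by linarith : (0:ℝ) ≤ 1 - -g1 a b p)]
        simp only [Fpiece, Fcube]
        rw [hgp]
        ring1
      · simp only [Dom, Set.mem_setOf_eq] at h4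
        obtain ⟨c1, c2, c3⟩ := h4
        have hM : |g1 a b p| ⊔ (|g2 a h b p| ⊔ |g3 h p|) = -g3 h p :=
          le_antisymm (max_le (abs_le.mpr ⟨by linarith, by linarith⟩)
            (max_le (abs_le.mpr ⟨by linarith, by linarith⟩)
              (le_of_eq (abs_of_nonpos (by linarith)))))
            ((neg_le_abs _).trans ((le_max_right _ _).trans (le_max_right _ _)))
        rw [hM, max_eq_right (by linarith : (0:ℝ) ≤ 1 - -g3 h p)]
        simp only [Fpiece, Fcube]
        rw [hgp]
        ring1
      · simp only [Dom, Set.mem_setOf_eq] at h5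
        obtain ⟨c1, c2, c3⟩ := h5
        have hM : |g1 a b p| ⊔ (|g2 a h b p| ⊔ |g3 h p|) = g2 a h b p :=
          le_antisymm (max_le (abs_le.mpr ⟨by linarith, by linarith⟩)
            (max_le (le_of_eq (abs_of_nonneg (by linarith)))
              (abs_le.mpr ⟨by linarith, by linarith⟩)))
            ((le_abs_self _).trans ((le_max_left _ _).trans (le_max_right _ _)))
        rw [hM, max_eq_right (by linarith : (0:ℝ) ≤ 1 - g2 a h b p)]
        simp only [Fpiece, Fcube]
        rw [hgp]
        ring1
      · have hM1 : 1 < |g1 a b p| ⊔ (|g2 a h b p| ⊔ |g3 h p|) := by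
          by_contra hle
          push_neg at hle
          have b1 := abs_le.mp ((le_max_left _ _).trans hle)
          have b2 := abs_le.mp (((le_max_left _ _).trans (le_max_right _ _)).trans hle)
          have b3 := abs_le.mp (((le_max_right _ _).trans (le_max_right _ _)).trans hle)
          simp only [Dom, Set.mem_setOf_eq] at h0 h1 h2 h3 h4 h5
          rcases le_total 0 (g2 a h b p) with hs | hs
          · rcases le_total 0 (g3 h p) with ht | ht
            · exact h0 ⟨hs, ht, b1.2⟩
            · rcases le_total 0 (g1 a b p) with hu | hu
              · exact h5 ⟨hu, ht, b2.2⟩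
              · exact h4 ⟨hu, hs, b3.1⟩
          · rcases le_total 0 (g3 h p) with ht | ht
            · rcases le_total 0 (g1 a b p) with hu | hu
              · exact h1 ⟨hu, hs, b3.2⟩
              · exact h2 ⟨hu, ht, b2.1⟩
            · exact h3 ⟨hs, ht, b1.1⟩
        rw [max_eq_left (by linarith), zero_mul]
    rw [hphi]
    fun_prop
end
end

section
/- The basic full node shape function φ is supported in the open horizontal strip |y| < h: for every (x,y) ∈ ℝ² with |y| ≥ h, φ(x,y) = 0. -/
noncomputable section

/-- `φ` is supported in the horizontal strip `|y| < h`. -/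
theorem phi_supported_in_strip (a h b : ℝ) (ha : 0 < a) (hh : 0 < h) (hb : h ≤ b) :
    ∀ x y : ℝ, h ≤ |y| → phi a h b (x, y) = 0 := by
  intro x y hy
  have hb0 : 0 < b := lt_of_lt_of_le hh hb
  have hid : g1 a b (x, y) = g2 a h b (x, y) + g3 h (x, y) := by
    simp only [g1, g2, g3]
    field_simp
    ring
  have hg3 : 1 ≤ g3 h (x, y) ∨ g3 h (x, y) ≤ -1 := by
    rcases le_abs.mp hy with h1 | h1
    · left; exact (one_le_div hh).mpr h1
    · right
      show y / h ≤ -1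
      rw [div_le_iff₀ hh]; linarith
  simp only [phi]
  split_ifs with h1 h2 h3 h4 h5 h6
  · obtain ⟨A, B, C⟩ : 0 ≤ g2 a h b (x, y) ∧ 0 ≤ g3 h (x, y) ∧ g1 a b (x, y) ≤ 1 := h1
    show Fcube (1 - g1 a b (x, y)) (g2 a h b (x, y)) (g3 h (x, y)) = 0
    rcases hg3 with hg | hg
    · have hu : (1 : ℝ) - g1 a b (x, y) = 0 := by linarith
      rw [hu]; simp [Fcube]
    · linarith
  · obtain ⟨A, B, C⟩ : 0 ≤ g1 a b (x, y) ∧ g2 a h b (x, y) ≤ 0 ∧ g3 h (x, y) ≤ 1 := h2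
    show Fcube (1 - g3 h (x, y)) (g1 a b (x, y)) (-g2 a h b (x, y)) = 0
    rcases hg3 with hg | hg
    · have hu : (1 : ℝ) - g3 h (x, y) = 0 := by linarith
      rw [hu]; simp [Fcube]
    · linarith
  · obtain ⟨A, B, C⟩ : g1 a b (x, y) ≤ 0 ∧ 0 ≤ g3 h (x, y) ∧ -1 ≤ g2 a h b (x, y) := h3
    show Fcube (1 + g2 a h b (x, y)) (-g1 a b (x, y)) (g3 h (x, y)) = 0
    rcases hg3 with hg | hg
    · have hu : (1 : ℝ) + g2 a h b (x, y) = 0 := by linarith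
      rw [hu]; simp [Fcube]
    · linarith
  · obtain ⟨A, B, C⟩ : g2 a h b (x, y) ≤ 0 ∧ g3 h (x, y) ≤ 0 ∧ -1 ≤ g1 a b (x, y) := h4
    show Fcube (1 + g1 a b (x, y)) (-g2 a h b (x, y)) (-g3 h (x, y)) = 0
    rcases hg3 with hg | hg
    · linarith
    · have hu : (1 : ℝ) + g1 a b (x, y) = 0 := by linarith
      rw [hu]; simp [Fcube]
  · obtain ⟨A, B, C⟩ : g1 a b (x, y) ≤ 0 ∧ 0 ≤ g2 a h b (x, y) ∧ -1 ≤ g3 h (x, y) := h5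
    show Fcube (1 + g3 h (x, y)) (-g1 a b (x, y)) (g2 a h b (x, y)) = 0
    rcases hg3 with hg | hg
    · linarith
    · have hu : (1 : ℝ) + g3 h (x, y) = 0 := by linarith
      rw [hu]; simp [Fcube]
  · obtain ⟨A, B, C⟩ : 0 ≤ g1 a b (x, y) ∧ g3 h (x, y) ≤ 0 ∧ g2 a h b (x, y) ≤ 1 := h6
    show Fcube (1 - g2 a h b (x, y)) (g1 a b (x, y)) (-g3 h (x, y)) = 0
    rcases hg3 with hg | hg
    · linarith
    · have hu : (1 : ℝ) - g2 a h b (x, y) = 0 := by linarith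
      rw [hu]; simp [Fcube]
  · rfl
end
end

section
/- Vertical translates of the basic full node shape function by at least two grid steps have disjoint supports: for every integer d with |d| ≥ 2 and every (x,y) ∈ ℝ², φ(x,y) · φ(x, y - d·h) = 0. (This underlies the sparsity relation k_{cd,rs} = 0 of the element stiffness matrix when node indices differ by more than one.) -/
noncomputable section

lemma phi_eq_zero_of_abs (a h b : ℝ) (hh : 0 < h) (p : ℝ × ℝ)
    (hy : h ≤ |p.2|) : phi a h b p = 0 := by
  have hsum : g1 a b p = g2 a h b p + g3 h p := by
    unfold g1 g2 g3; ring
  rcases le_or_gt h p.2 with hyp | hyp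
  · -- g3 p ≥ 1
    have hg3 : 1 ≤ g3 h p := by
      unfold g3; rw [le_div_iff₀ hh]; linarith
    unfold phi
    split_ifs with h0 h1 h2 h3 h4 h5
    · obtain ⟨hA, hB, hC⟩ := h0
      have : g1 a b p = 1 := by linarith
      simp [Fpiece, Fcube, this]
    · obtain ⟨hA, hB, hC⟩ := h1
      have : g3 h p = 1 := by linarith
      simp [Fpiece, Fcube, this]
    · obtain ⟨hA, hB, hC⟩ := h2
      have : g2 a h b p = -1 := by linarith
      simp [Fpiece, Fcube, this]
    · obtain ⟨hA, hB, hC⟩ := h3; linarith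
    · obtain ⟨hA, hB, hC⟩ := h4; linarith
    · obtain ⟨hA, hB, hC⟩ := h5; linarith
    · rfl
  · -- p.2 ≤ -h, so g3 p ≤ -1
    have hyn : p.2 ≤ -h := by
      rcases le_abs.1 hy with h' | h'
      · linarith
      · linarith
    have hg3 : g3 h p ≤ -1 := by
      unfold g3; rw [div_le_iff₀ hh]; linarith
    unfold phi
    split_ifs with h0 h1 h2 h3 h4 h5
    · obtain ⟨hA, hB, hC⟩ := h0; linarith
    · obtain ⟨hA, hB, hC⟩ := h1; linarith
    · obtain ⟨hA, hB, hC⟩ := h2; linarith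
    · obtain ⟨hA, hB, hC⟩ := h3
      have : g1 a b p = -1 := by linarith
      simp [Fpiece, Fcube, this]
    · obtain ⟨hA, hB, hC⟩ := h4
      have : g3 h p = -1 := by linarith
      simp [Fpiece, Fcube, this]
    · obtain ⟨hA, hB, hC⟩ := h5
      have : g2 a h b p = 1 := by linarith
      simp [Fpiece, Fcube, this]
    · rfl

/-- Vertical translates of `φ` by at least two grid steps have disjoint supports. -/
theorem phi_translates_disjoint_support (a h b : ℝ)
    (ha : 0 < a) (hh : 0 < h) (hb : h ≤ b) :
    ∀ d : ℤ, 2 ≤ |d| → ∀ x y : ℝ,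
      phi a h b (x, y) * phi a h b (x, y - (d : ℝ) * h) = 0 := by
  intro d hd x y
  have hdh : 2 * h ≤ |(d : ℝ) * h| := by
    rw [abs_mul, abs_of_pos hh]
    have : (2 : ℝ) ≤ |(d : ℝ)| := by
      rw [← Int.cast_abs]; exact_mod_cast hd
    nlinarith
  rcases le_or_gt h |y| with hy | hy
  · rw [phi_eq_zero_of_abs a h b hh (x, y) hy, zero_mul]
  · have : h ≤ |y - (d : ℝ) * h| := by
      have h1 : |(d : ℝ) * h| - |y| ≤ |y - (d : ℝ) * h| := by
        have := abs_sub_abs_le_abs_sub ((d : ℝ) * h) y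
        rw [abs_sub_comm] at this
        linarith
      linarith
    rw [phi_eq_zero_of_abs a h b hh (x, y - (d : ℝ) * h) this, mul_zero]
end
end

section
/- The basic full node shape function φ satisfies the Kronecker delta property on the node lattice: for all integers p and q, φ(a·(p - q·h/b), q·h) = 1 if p = q = 0, and φ(a·(p - q·h/b), q·h) = 0 otherwise. -/
noncomputable section

/-- Kronecker delta property of `φ` on the node lattice. -/
theorem phi_kronecker_delta_on_lattice (a h b : ℝ)
    (ha : 0 < a) (hh : 0 < h) (hb : h ≤ b) :
    ∀ p q : ℤ,
      phi a h b (a * ((p : ℝ) - (q : ℝ) * h / b), (q : ℝ) * h)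
        = if p = 0 ∧ q = 0 then 1 else 0 := by
  intro p q
  have ha' : a ≠ 0 := ne_of_gt ha
  have hh' : h ≠ 0 := ne_of_gt hh
  have hb0 : (0:ℝ) < b := lt_of_lt_of_le hh hb
  have hb' : b ≠ 0 := ne_of_gt hb0
  set pt : ℝ × ℝ := (a * ((p : ℝ) - (q : ℝ) * h / b), (q : ℝ) * h) with hpt
  have h1 : g1 a b pt = (p : ℝ) := by
    simp only [g1, hpt]; field_simp; ring
  have h2 : g2 a h b pt = (p : ℝ) - (q : ℝ) := by
    simp only [g2, hpt]; field_simp; ring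
  have h3 : g3 h pt = (q : ℝ) := by
    simp only [g3, hpt]; field_simp
  by_cases hpq : p = 0 ∧ q = 0
  · obtain ⟨hp0, hq0⟩ := hpq
    subst hp0; subst hq0
    simp only [phi, Dom, Fpiece, Set.mem_setOf_eq, h1, h2, h3]
    norm_num [Fcube]
  · rw [if_neg hpq]
    simp only [phi, Dom, Fpiece, Set.mem_setOf_eq, h1, h2, h3]
    split_ifs with c0 c1 c2 c3 c4 c5
    · -- D0 : q ≤ p, 0 ≤ q, p ≤ 1  ⇒ p = 1
      obtain ⟨a1, a2, a3⟩ := c0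
      have hp : p = 1 := by
        have i1 : (0:ℤ) ≤ p - q := by exact_mod_cast a1
        have i2 : (0:ℤ) ≤ q := by exact_mod_cast a2
        have i3 : p ≤ 1 := by exact_mod_cast a3
        omega
      have : (p : ℝ) = 1 := by exact_mod_cast hp
      simp [Fcube, this]
    · -- D1 : 0 ≤ p, p ≤ q, q ≤ 1 ⇒ q = 1
      obtain ⟨a1, a2, a3⟩ := c1
      have hq : q = 1 := by
        have i1 : (0:ℤ) ≤ p := by exact_mod_cast a1
        have i2 : p - q ≤ 0 := by exact_mod_cast a2
        have i3 : q ≤ 1 := by exact_mod_cast a3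
        omega
      have : (q : ℝ) = 1 := by exact_mod_cast hq
      simp [Fcube, this]
    · -- D2 : p ≤ 0, 0 ≤ q, -1 ≤ p - q ⇒ p - q = -1
      obtain ⟨a1, a2, a3⟩ := c2
      have hpq' : p - q = -1 := by
        have i1 : p ≤ 0 := by exact_mod_cast a1
        have i2 : (0:ℤ) ≤ q := by exact_mod_cast a2
        have i3 : (-1:ℤ) ≤ p - q := by exact_mod_cast a3
        omega
      have : (p : ℝ) - (q : ℝ) = -1 := by exact_mod_cast hpq'
      simp [Fcube, this]
    · -- D3 : p ≤ q, q ≤ 0, -1 ≤ p ⇒ p = -1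
      obtain ⟨a1, a2, a3⟩ := c3
      have hp : p = -1 := by
        have i1 : p - q ≤ 0 := by exact_mod_cast a1
        have i2 : q ≤ 0 := by exact_mod_cast a2
        have i3 : (-1:ℤ) ≤ p := by exact_mod_cast a3
        omega
      have : (p : ℝ) = -1 := by exact_mod_cast hp
      simp [Fcube, this]
    · -- D4 : p ≤ 0, q ≤ p, -1 ≤ q ⇒ q = -1
      obtain ⟨a1, a2, a3⟩ := c4
      have hq : q = -1 := by
        have i1 : p ≤ 0 := by exact_mod_cast a1
        have i2 : (0:ℤ) ≤ p - q := by exact_mod_cast a2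
        have i3 : (-1:ℤ) ≤ q := by exact_mod_cast a3
        omega
      have : (q : ℝ) = -1 := by exact_mod_cast hq
      simp [Fcube, this]
    · -- D5 : 0 ≤ p, q ≤ 0, p - q ≤ 1 ⇒ p - q = 1
      obtain ⟨a1, a2, a3⟩ := c5
      have hpq' : p - q = 1 := by
        have i1 : (0:ℤ) ≤ p := by exact_mod_cast a1
        have i2 : q ≤ 0 := by exact_mod_cast a2
        have i3 : p - q ≤ 1 := by exact_mod_cast a3
        omega
      have : (p : ℝ) - (q : ℝ) = 1 := by exact_mod_cast hpq'
      simp [Fcube, this]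
    · rfl
end
end

section
/- For every positive integer m, the scaled and shifted family of basis functions ψ_{r,s}(x,y) = φ(m·x - (r - s·h/b)·a, m·y - s·h), indexed by the integer pairs (r,s) with 0 ≤ s ≤ r ≤ m, is linearly independent over ℝ in the real vector space of functions ℝ² → ℝ. (These functions span the displacement subspace V_m of the multiresolution analysis.) -/
noncomputable section

lemma phi_lattice (a h b : ℝ) (ha : 0 < a) (hh : 0 < h) (hb : h ≤ b) (k l : ℤ) :
    phi a h b (((k : ℝ) - (l : ℝ) * h / b) * a, (l : ℝ) * h)
      = if k = 0 ∧ l = 0 then 1 else 0 := by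
  have hb0 : 0 < b := lt_of_lt_of_le hh hb
  set q : ℝ × ℝ := (((k : ℝ) - (l : ℝ) * h / b) * a, (l : ℝ) * h) with hq
  have hg1 : g1 a b q = (k : ℝ) := by
    simp only [g1, hq]
    field_simp
    ring
  have hg2 : g2 a h b q = (k : ℝ) - (l : ℝ) := by
    simp only [g2, hq]
    field_simp
    ring
  have hg3 : g3 h q = (l : ℝ) := by
    simp only [g3, hq]
    field_simp
  by_cases hkl : k = 0 ∧ l = 0
  · obtain ⟨hk, hl⟩ := hkl
    subst hk; subst hl
    have h0 : q ∈ Dom a h b 0 := by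
      simp only [Dom, Set.mem_setOf_eq, hg1, hg2, hg3]
      norm_num
    rw [phi, if_pos h0]
    simp only [Fpiece, Fcube, hg1, hg2, hg3]
    norm_num
  · rw [if_neg hkl]
    rw [phi]
    split_ifs with h0 h1 h2 h3 h4 h5
    · -- D0 : 0 ≤ k - l, 0 ≤ l, k ≤ 1
      obtain ⟨c1, c2, c3⟩ := h0
      simp only [hg1, hg2, hg3] at c1 c2 c3
      have i1 : (0 : ℤ) ≤ k - l := by exact_mod_cast c1
      have i2 : (0 : ℤ) ≤ l := by exact_mod_cast c2
      have i3 : k ≤ 1 := by exact_mod_cast c3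
      have hk1 : k = 1 := by
        rcases Decidable.not_and_iff_or_not.mp hkl with h | h <;> omega
      simp only [Fpiece, hg1, hk1, Fcube]
      push_cast
      ring
    · -- D1 : 0 ≤ k, k - l ≤ 0, l ≤ 1
      obtain ⟨c1, c2, c3⟩ := h1
      simp only [hg1, hg2, hg3] at c1 c2 c3
      have i1 : (0 : ℤ) ≤ k := by exact_mod_cast c1
      have i2 : k - l ≤ 0 := by exact_mod_cast c2
      have i3 : l ≤ 1 := by exact_mod_cast c3
      have hl1 : l = 1 := by
        rcases Decidable.not_and_iff_or_not.mp hkl with h | h <;> omega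
      simp only [Fpiece, hg3, hl1, Fcube]
      push_cast
      ring
    · -- D2 : k ≤ 0, 0 ≤ l, -1 ≤ k - l
      obtain ⟨c1, c2, c3⟩ := h2
      simp only [hg1, hg2, hg3] at c1 c2 c3
      have i1 : k ≤ 0 := by exact_mod_cast c1
      have i2 : (0 : ℤ) ≤ l := by exact_mod_cast c2
      have i3 : (-1 : ℤ) ≤ k - l := by exact_mod_cast c3
      have hkl1 : k - l = -1 := by
        rcases Decidable.not_and_iff_or_not.mp hkl with h | h <;> omega
      have hg2' : g2 a h b q = -1 := by rw [hg2]; exact_mod_cast hkl1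
      simp only [Fpiece, hg2', Fcube]
      ring
    · -- D3 : k - l ≤ 0, l ≤ 0, -1 ≤ k
      obtain ⟨c1, c2, c3⟩ := h3
      simp only [hg1, hg2, hg3] at c1 c2 c3
      have i1 : k - l ≤ 0 := by exact_mod_cast c1
      have i2 : l ≤ 0 := by exact_mod_cast c2
      have i3 : (-1 : ℤ) ≤ k := by exact_mod_cast c3
      have hk1 : k = -1 := by
        rcases Decidable.not_and_iff_or_not.mp hkl with h | h <;> omega
      have hg1' : g1 a b q = -1 := by rw [hg1]; exact_mod_cast hk1
      simp only [Fpiece, hg1', Fcube]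
      ring
    · -- D4 : k ≤ 0, 0 ≤ k - l, -1 ≤ l
      obtain ⟨c1, c2, c3⟩ := h4
      simp only [hg1, hg2, hg3] at c1 c2 c3
      have i1 : k ≤ 0 := by exact_mod_cast c1
      have i2 : (0 : ℤ) ≤ k - l := by exact_mod_cast c2
      have i3 : (-1 : ℤ) ≤ l := by exact_mod_cast c3
      have hl1 : l = -1 := by
        rcases Decidable.not_and_iff_or_not.mp hkl with h | h <;> omega
      have hg3' : g3 h q = -1 := by rw [hg3]; exact_mod_cast hl1
      simp only [Fpiece, hg3', Fcube]
      ring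
    · -- D5 : 0 ≤ k, l ≤ 0, k - l ≤ 1
      obtain ⟨c1, c2, c3⟩ := h5
      simp only [hg1, hg2, hg3] at c1 c2 c3
      have i1 : (0 : ℤ) ≤ k := by exact_mod_cast c1
      have i2 : l ≤ 0 := by exact_mod_cast c2
      have i3 : k - l ≤ 1 := by exact_mod_cast c3
      have hkl1 : k - l = 1 := by
        rcases Decidable.not_and_iff_or_not.mp hkl with h | h <;> omega
      have hg2' : g2 a h b q = 1 := by rw [hg2]; exact_mod_cast hkl1
      simp only [Fpiece, hg2', Fcube]
      ring
    · rfl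

/-- For every positive integer `m`, the scaled and shifted family
`ψ_{r,s}(x,y) = φ(m·x - (r - s·h/b)·a, m·y - s·h)` with `0 ≤ s ≤ r ≤ m`
is linearly independent over `ℝ`. -/
theorem scaled_shifted_family_linearIndependent (a h b : ℝ)
    (ha : 0 < a) (hh : 0 < h) (hb : h ≤ b) (m : ℕ) (hm : 0 < m) :
    LinearIndependent ℝ
      (fun rs : {q : ℕ × ℕ // q.2 ≤ q.1 ∧ q.1 ≤ m} =>
        fun p : ℝ × ℝ =>
          phi a h b ((m : ℝ) * p.1 - ((rs.1.1 : ℝ) - (rs.1.2 : ℝ) * h / b) * a,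
            (m : ℝ) * p.2 - (rs.1.2 : ℝ) * h)) := by
  have hb0 : 0 < b := lt_of_lt_of_le hh hb
  have hm' : ((m : ℝ)) ≠ 0 := by positivity
  rw [linearIndependent_iff']
  intro s c hsum i hi
  set pi : ℝ × ℝ := ((((i.1.1 : ℝ) - (i.1.2 : ℝ) * h / b) * a) / m,
    ((i.1.2 : ℝ) * h) / m) with hpi
  have hs := congrFun hsum pi
  simp only [Finset.sum_apply, Pi.smul_apply, smul_eq_mul, Pi.zero_apply] at hs
  have key : ∀ j : {q : ℕ × ℕ // q.2 ≤ q.1 ∧ q.1 ≤ m},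
      phi a h b ((m : ℝ) * pi.1 - ((j.1.1 : ℝ) - (j.1.2 : ℝ) * h / b) * a,
        (m : ℝ) * pi.2 - (j.1.2 : ℝ) * h) = if j = i then 1 else 0 := by
    intro j
    set k : ℤ := (i.1.1 : ℤ) - (j.1.1 : ℤ) with hk
    set l : ℤ := (i.1.2 : ℤ) - (j.1.2 : ℤ) with hl
    have harg : ((m : ℝ) * pi.1 - ((j.1.1 : ℝ) - (j.1.2 : ℝ) * h / b) * a,
        (m : ℝ) * pi.2 - (j.1.2 : ℝ) * h)
        = (((k : ℝ) - (l : ℝ) * h / b) * a, (l : ℝ) * h) := by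
      rw [hpi]
      refine Prod.ext ?_ ?_
      · simp only [hk, hl]
        push_cast
        field_simp
        ring
      · simp only [hl]
        push_cast
        field_simp
    rw [harg, phi_lattice a h b ha hh hb k l]
    by_cases hj : j = i
    · subst hj
      simp [hk, hl]
    · rw [if_neg ?_, if_neg hj]
      intro ⟨hk0, hl0⟩
      apply hj
      have e1 : j.1.1 = i.1.1 := by omega
      have e2 : j.1.2 = i.1.2 := by omega
      exact Subtype.ext (Prod.ext e1 e2)
  simp only [key, mul_ite, mul_one, mul_zero, Finset.sum_ite_eq', hi, if_pos] at hs
  exact hs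
end
end
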